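/- arXiv:2103.03983 — 6 statements merged into one kernel-verified Lean document; each statement's English description precedes it below -/
import Mathlib

section
/- Let V be a finite-dimensional complex vector space and N : V → V a nilpotent endomorphism. Then there exists a unique increasing filtration W_• of V (the monodromy filtration of N) satisfying: (1) N(W_ℓ) ⊆ W_{ℓ-2} for all ℓ ∈ ℤ, and (2) for every ℓ ≥ 0 the induced map N^ℓ : gr^W_ℓ V → gr^W_{-ℓ} V is an isomorphism. -/
/-- `W` is a monodromy filtration for the nilpotent endomorphism `N` : it is an
increasing, exhaustive and separated filtration such that `N (W ℓ) ⊆ W (ℓ - 2)` and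
the induced map `N ^ ℓ : gr^W_ℓ → gr^W_{-ℓ}` is an isomorphism for every `ℓ ≥ 0`
(injectivity and surjectivity of the induced map are expressed at the level of
representatives). -/
def IsMonodromyFiltration {V : Type*} [AddCommGroup V] [Module ℂ V]
    (N : V →ₗ[ℂ] V) (W : ℤ → Submodule ℂ V) : Prop :=
  Monotone W ∧ (∃ a : ℤ, W a = ⊥) ∧ (∃ b : ℤ, W b = ⊤) ∧
  (∀ ℓ : ℤ, (W ℓ).map N ≤ W (ℓ - 2)) ∧
  (∀ ℓ : ℕ,
    (∀ x ∈ W (ℓ : ℤ), (N ^ ℓ) x ∈ W (-(ℓ : ℤ) - 1) → x ∈ W ((ℓ : ℤ) - 1)) ∧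
    (∀ y ∈ W (-(ℓ : ℤ)), ∃ x ∈ W (ℓ : ℤ), (N ^ ℓ) x - y ∈ W (-(ℓ : ℤ) - 1)))

namespace MonodromyAux

variable {V : Type*} [AddCommGroup V] [Module ℂ V]

lemma pow_ker_mono (N : V →ₗ[ℂ] V) {a b : ℕ} (h : a ≤ b) :
    LinearMap.ker (N ^ a) ≤ LinearMap.ker (N ^ b) := by
  intro x hx
  rw [LinearMap.mem_ker] at hx ⊢
  have hb : N ^ b = N ^ (b - a) * N ^ a := by rw [← pow_add]; congr 1; omega
  rw [hb, Module.End.mul_apply, hx, map_zero]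

lemma map_ker_bot (N : V →ₗ[ℂ] V) {t j : ℕ} (h : t ≤ j) :
    (LinearMap.ker (N ^ t)).map (N ^ j) = ⊥ := by
  rw [eq_bot_iff]
  rintro x hx
  simp only [Submodule.mem_map, LinearMap.mem_ker] at hx
  obtain ⟨y, hy, rfl⟩ := hx
  have hb : N ^ j = N ^ (j - t) * N ^ t := by rw [← pow_add]; congr 1; omega
  simp [hb, Module.End.mul_apply, hy]

/-- The explicit monodromy filtration: `W ℓ = ⨆ j, N^j (ker N^(ℓ+2j+1))`. -/
noncomputable def Wf (N : V →ₗ[ℂ] V) (ℓ : ℤ) : Submodule ℂ V :=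
  ⨆ j : ℕ, (LinearMap.ker (N ^ (ℓ + 2 * (j : ℤ) + 1).toNat)).map (N ^ j)

lemma le_Wf (N : V →ₗ[ℂ] V) (ℓ : ℤ) (j : ℕ) :
    (LinearMap.ker (N ^ (ℓ + 2 * (j : ℤ) + 1).toNat)).map (N ^ j) ≤ Wf N ℓ :=
  le_iSup (fun j : ℕ => (LinearMap.ker (N ^ (ℓ + 2 * (j : ℤ) + 1).toNat)).map (N ^ j)) j

lemma Wf_mono (N : V →ₗ[ℂ] V) : Monotone (Wf N) := by
  intro ℓ ℓ' h
  refine iSup_mono fun j => Submodule.map_mono (pow_ker_mono N ?_)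
  exact Int.toNat_le_toNat (by omega)

lemma Wf_bot (N : V →ₗ[ℂ] V) {k : ℕ} (hk : N ^ k = 0) :
    Wf N (-(2 * (k : ℤ)) - 2) = ⊥ := by
  rw [eq_bot_iff]
  refine iSup_le fun j => ?_
  rcases le_or_gt j (2 * k + 1) with hj | hj
  · have ht : (-(2 * (k : ℤ)) - 2 + 2 * (j : ℤ) + 1).toNat ≤ j := by
      rw [Int.toNat_le]; omega
    rw [map_ker_bot N ht]
  · have hz : N ^ j = 0 := pow_eq_zero_of_le (by omega) hk
    rw [hz, Submodule.map_zero]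

lemma Wf_top (N : V →ₗ[ℂ] V) {k : ℕ} (hk : N ^ k = 0) :
    Wf N (k : ℤ) = ⊤ := by
  rw [eq_top_iff]
  have h0 : ((k : ℤ) + 2 * ((0 : ℕ) : ℤ) + 1).toNat = k + 1 := by omega
  have hker : LinearMap.ker (N ^ (k + 1)) = ⊤ := by
    rw [LinearMap.ker_eq_top, pow_succ, hk, zero_mul]
  have hle : (⊤ : Submodule ℂ V) ≤ (LinearMap.ker (N ^ ((k : ℤ) + 2 * ((0 : ℕ) : ℤ) + 1).toNat)).map (N ^ 0) := by
    rw [h0, hker, pow_zero, Module.End.one_eq_id, Submodule.map_id]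
  exact le_trans hle (le_Wf N (k : ℤ) 0)

lemma Wf_map (N : V →ₗ[ℂ] V) (ℓ : ℤ) : (Wf N ℓ).map N ≤ Wf N (ℓ - 2) := by
  rw [Wf, Submodule.map_iSup]
  refine iSup_le fun j => ?_
  have hcomp : Submodule.map N (Submodule.map (N ^ j) (LinearMap.ker (N ^ (ℓ + 2 * (j : ℤ) + 1).toNat)))
      = (LinearMap.ker (N ^ (ℓ + 2 * (j : ℤ) + 1).toNat)).map (N ^ (j + 1)) := by
    rw [← Submodule.map_comp, ← Module.End.mul_eq_comp, ← pow_succ']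
  rw [hcomp]
  have he : ℓ + 2 * (j : ℤ) + 1 = (ℓ - 2) + 2 * ((j + 1 : ℕ) : ℤ) + 1 := by push_cast; ring
  rw [he]
  exact le_Wf N (ℓ - 2) (j + 1)

lemma Wf_surj_aux (N : V →ₗ[ℂ] V) (ℓ : ℕ) :
    Wf N (-(ℓ : ℤ)) ≤ (Wf N (ℓ : ℤ)).map (N ^ ℓ) := by
  refine iSup_le fun j => ?_
  rcases lt_or_ge j ℓ with hj | hj
  · have ht : (-(ℓ : ℤ) + 2 * (j : ℤ) + 1).toNat ≤ j := by rw [Int.toNat_le]; omega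
    rw [map_ker_bot N ht]
    exact bot_le
  · set i := j - ℓ with hi
    have he : (-(ℓ : ℤ) + 2 * (j : ℤ) + 1) = ((ℓ : ℤ) + 2 * (i : ℤ) + 1) := by omega
    have hcomp : N ^ j = (N ^ ℓ).comp (N ^ i) := by
      rw [← Module.End.mul_eq_comp, ← pow_add]; congr 1; omega
    rw [he, hcomp, Submodule.map_comp]
    exact Submodule.map_mono (le_Wf N (ℓ : ℤ) i)

lemma Wf_inj_aux (N : V →ₗ[ℂ] V) (ℓ : ℕ) :
    Wf N (-(ℓ : ℤ) - 1) ≤ (Wf N ((ℓ : ℤ) - 1)).map (N ^ ℓ) := by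
  refine iSup_le fun j => ?_
  rcases le_or_gt j ℓ with hj | hj
  · have ht : (-(ℓ : ℤ) - 1 + 2 * (j : ℤ) + 1).toNat ≤ j := by rw [Int.toNat_le]; omega
    rw [map_ker_bot N ht]
    exact bot_le
  · set i := j - ℓ with hi
    have he : (-(ℓ : ℤ) - 1 + 2 * (j : ℤ) + 1) = (((ℓ : ℤ) - 1) + 2 * (i : ℤ) + 1) := by omega
    have hcomp : N ^ j = (N ^ ℓ).comp (N ^ i) := by
      rw [← Module.End.mul_eq_comp, ← pow_add]; congr 1; omega
    rw [he, hcomp, Submodule.map_comp]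
    exact Submodule.map_mono (le_Wf N ((ℓ : ℤ) - 1) i)

lemma ker_le_Wf (N : V →ₗ[ℂ] V) (ℓ : ℕ) :
    LinearMap.ker (N ^ ℓ) ≤ Wf N ((ℓ : ℤ) - 1) := by
  have h0 : ((ℓ : ℤ) - 1 + 2 * ((0 : ℕ) : ℤ) + 1).toNat = ℓ := by omega
  have := le_Wf N ((ℓ : ℤ) - 1) 0
  rw [h0] at this
  intro x hx
  exact this ⟨x, hx, by simp⟩

lemma Wf_isMonodromy (N : V →ₗ[ℂ] V) (hN : IsNilpotent N) :
    IsMonodromyFiltration N (Wf N) := by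
  obtain ⟨k, hk⟩ := hN
  refine ⟨Wf_mono N, ⟨-(2 * (k : ℤ)) - 2, Wf_bot N hk⟩, ⟨(k : ℤ), Wf_top N hk⟩,
    Wf_map N, fun ℓ => ⟨?_, ?_⟩⟩
  · -- injectivity
    intro x _ hNx
    obtain ⟨w, hw, hwx⟩ := Wf_inj_aux N ℓ hNx
    have hker : x - w ∈ LinearMap.ker (N ^ ℓ) := by
      rw [LinearMap.mem_ker, map_sub, hwx, sub_self]
    have : x = (x - w) + w := by abel
    rw [this]
    exact (Wf N ((ℓ : ℤ) - 1)).add_mem (ker_le_Wf N ℓ hker) hw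
  · -- surjectivity
    intro y hy
    obtain ⟨x, hx, hxy⟩ := Wf_surj_aux N ℓ hy
    exact ⟨x, hx, by rw [hxy, sub_self]; exact Submodule.zero_mem _⟩

/-! ### Uniqueness -/

variable {N : V →ₗ[ℂ] V} {W W' : ℤ → Submodule ℂ V}

lemma map_pow_le (hm : ∀ ℓ : ℤ, (W ℓ).map N ≤ W (ℓ - 2)) :
    ∀ (n : ℕ) (ℓ : ℤ), (W ℓ).map (N ^ n) ≤ W (ℓ - 2 * n) := by
  intro n
  induction n with
  | zero => intro ℓ; rw [pow_zero, Module.End.one_eq_id, Submodule.map_id]; simp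
  | succ n ih =>
    intro ℓ
    have hcomp : (W ℓ).map (N ^ (n + 1)) = ((W ℓ).map (N ^ n)).map N := by
      rw [← Submodule.map_comp, ← Module.End.mul_eq_comp, ← pow_succ']
    rw [hcomp]
    refine le_trans (Submodule.map_mono (ih ℓ)) (le_trans (hm _) (le_of_eq ?_))
    congr 1
    push_cast; ring

/-- Any monodromy filtration is `⊤` from level `k - 1` on. -/
lemma W_top (hW : IsMonodromyFiltration N W) {k : ℕ} (hk : N ^ k = 0)
    {ℓ : ℤ} (hℓ : (k : ℤ) ≤ ℓ) : W ℓ = ⊤ := by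
  obtain ⟨hmono, _, ⟨b, hb⟩, _, h5⟩ := hW
  -- descending induction claim
  have claim : ∀ (j : ℕ) (m : ℕ) (x : V), (N ^ (m + 1)) x = 0 →
      x ∈ W ((m : ℤ) + j) → x ∈ W (m : ℤ) := by
    intro j
    induction j with
    | zero => intro m x _ hx; simpa using hx
    | succ j ih =>
      intro m x hx0 hx
      have hcast : ((m : ℤ) + (j + 1 : ℕ)) = ((m + j + 1 : ℕ) : ℤ) := by push_cast; ring
      rw [hcast] at hx
      have h0 : (N ^ (m + j + 1)) x = 0 := by
        have : N ^ (m + j + 1) = N ^ j * N ^ (m + 1) := by rw [← pow_add]; congr 1; omega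
        rw [this, Module.End.mul_apply, hx0, map_zero]
      have := (h5 (m + j + 1)).1 x hx (by rw [h0]; exact Submodule.zero_mem _)
      have hcast2 : ((m + j + 1 : ℕ) : ℤ) - 1 = (m : ℤ) + j := by push_cast; ring
      rw [hcast2] at this
      exact ih m x hx0 this
  rw [eq_top_iff]
  intro x _
  have hxb : x ∈ W b := by rw [hb]; trivial
  set m := ℓ.toNat with hm
  have hmℓ : (m : ℤ) = ℓ := Int.toNat_of_nonneg (by omega)
  have hx0 : (N ^ (m + 1)) x = 0 := by
    have : N ^ (m + 1) = 0 := pow_eq_zero_of_le (by omega) hk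
    rw [this]; simp
  have hxm : x ∈ W ((m : ℤ) + (b - m).toNat) := by
    refine hmono ?_ hxb
    have := Int.self_le_toNat (b - (m : ℤ))
    omega
  have := claim (b - (m : ℤ)).toNat m x hx0 hxm
  rw [hmℓ] at this
  exact this

/-- Any monodromy filtration is `⊥` from level `-k` down. -/
lemma W_bot (hW : IsMonodromyFiltration N W) {k : ℕ} (hk : N ^ k = 0)
    {ℓ : ℤ} (hℓ : ℓ ≤ -(k : ℤ)) : W ℓ = ⊥ := by
  obtain ⟨hmono, ⟨a, ha⟩, _, _, h5⟩ := hW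
  set m₁ := (-a).toNat with hm₁
  have claim : ∀ (i : ℕ) (m : ℕ), m₁ ≤ m + i → W (-(m : ℤ)) ≤ LinearMap.range (N ^ m) := by
    intro i
    induction i with
    | zero =>
      intro m hm
      have : W (-(m : ℤ)) ≤ W a := by
        refine hmono ?_
        have := Int.self_le_toNat (-a)
        omega
      rw [ha] at this
      exact le_trans this bot_le
    | succ i ih =>
      intro m hm y hy
      obtain ⟨x, _, hd⟩ := (h5 m).2 y hy
      have hcast : (-(m : ℤ) - 1) = -((m + 1 : ℕ) : ℤ) := by push_cast; ring
      rw [hcast] at hd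
      have hd2 := ih (m + 1) (by omega) hd
      obtain ⟨z, hz⟩ := hd2
      have hzz : (N ^ (m + 1)) z = (N ^ m) (N z) := by
        rw [pow_succ, Module.End.mul_apply]
      refine ⟨x - N z, ?_⟩
      rw [map_sub, ← hzz, hz]
      abel
  have h1 : W ℓ ≤ W (-(k : ℤ)) := hmono hℓ
  have h2 : W (-(k : ℤ)) ≤ LinearMap.range (N ^ k) := claim m₁ k (by omega)
  rw [hk, LinearMap.range_zero] at h2
  rw [eq_bot_iff]
  exact le_trans h1 h2

lemma step_pos (hW : IsMonodromyFiltration N W) (hW' : IsMonodromyFiltration N W') (h : ℕ)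
    (e1 : W ((h : ℤ) + 1) ≤ W' ((h : ℤ) + 1)) (e2 : W (-(h : ℤ) - 2) ≤ W' (-(h : ℤ) - 2)) :
    W (h : ℤ) ≤ W' (h : ℤ) := by
  intro x hx
  have hx1 : x ∈ W' ((h : ℤ) + 1) := e1 (hW.1 (by omega) hx)
  have hx1' : x ∈ W' (((h + 1 : ℕ)) : ℤ) := by
    have : ((h + 1 : ℕ) : ℤ) = (h : ℤ) + 1 := by push_cast; ring
    rw [this]; exact hx1
  have hNx : (N ^ (h + 1)) x ∈ W ((h : ℤ) - 2 * ((h + 1 : ℕ) : ℤ)) :=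
    map_pow_le hW.2.2.2.1 (h + 1) (h : ℤ) ⟨x, hx, rfl⟩
  have hidx : (h : ℤ) - 2 * ((h + 1 : ℕ) : ℤ) = -(h : ℤ) - 2 := by push_cast; ring
  rw [hidx] at hNx
  have hNx' : (N ^ (h + 1)) x ∈ W' (-((h + 1 : ℕ) : ℤ) - 1) := by
    have : -((h + 1 : ℕ) : ℤ) - 1 = -(h : ℤ) - 2 := by push_cast; ring
    rw [this]; exact e2 hNx
  have := (hW'.2.2.2.2 (h + 1)).1 x hx1' hNx'
  have hcast : ((h + 1 : ℕ) : ℤ) - 1 = (h : ℤ) := by push_cast; ring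
  rw [hcast] at this
  exact this

lemma step_neg (hW : IsMonodromyFiltration N W) (hW' : IsMonodromyFiltration N W') (h : ℕ)
    (e1 : W ((h : ℤ) + 1) ≤ W' ((h : ℤ) + 1)) (e2 : W (-(h : ℤ) - 2) ≤ W' (-(h : ℤ) - 2)) :
    W (-(h : ℤ) - 1) ≤ W' (-(h : ℤ) - 1) := by
  intro y hy
  have hy' : y ∈ W (-((h + 1 : ℕ) : ℤ)) := by
    have : -((h + 1 : ℕ) : ℤ) = -(h : ℤ) - 1 := by push_cast; ring
    rw [this]; exact hy
  obtain ⟨x, hx, hd⟩ := (hW.2.2.2.2 (h + 1)).2 y hy'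
  have hx' : x ∈ W' ((h : ℤ) + 1) := by
    refine e1 ?_
    have : ((h + 1 : ℕ) : ℤ) = (h : ℤ) + 1 := by push_cast; ring
    rw [this] at hx; exact hx
  have hNx : (N ^ (h + 1)) x ∈ W' (((h : ℤ) + 1) - 2 * ((h + 1 : ℕ) : ℤ)) :=
    map_pow_le hW'.2.2.2.1 (h + 1) ((h : ℤ) + 1) ⟨x, hx', rfl⟩
  have hidx : ((h : ℤ) + 1) - 2 * ((h + 1 : ℕ) : ℤ) = -(h : ℤ) - 1 := by push_cast; ring
  rw [hidx] at hNx
  have hd' : (N ^ (h + 1)) x - y ∈ W' (-(h : ℤ) - 1) := by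
    have hcast : -((h + 1 : ℕ) : ℤ) - 1 = -(h : ℤ) - 2 := by push_cast; ring
    rw [hcast] at hd
    exact hW'.1 (by omega) (e2 hd)
  have : y = (N ^ (h + 1)) x - ((N ^ (h + 1)) x - y) := by abel
  rw [this]
  exact Submodule.sub_mem _ hNx hd'

lemma monodromy_unique (hW : IsMonodromyFiltration N W) (hW' : IsMonodromyFiltration N W')
    (hN : IsNilpotent N) : W = W' := by
  obtain ⟨k, hk⟩ := hN
  have main : ∀ t : ℕ, ∀ ℓ : ℤ,
      (((k : ℤ) - t ≤ ℓ) → W ℓ = W' ℓ) ∧ ((ℓ ≤ -(k : ℤ) + t - 1) → W ℓ = W' ℓ) := by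
    intro t
    induction t with
    | zero =>
      intro ℓ
      constructor
      · intro hℓ
        rw [W_top hW hk (by omega), W_top hW' hk (by omega)]
      · intro hℓ
        rw [W_bot hW hk (by omega), W_bot hW' hk (by omega)]
    | succ t ih =>
      intro ℓ
      rcases lt_or_ge (t : ℤ) (k : ℤ) with htk | htk
      · -- h := k - t - 1 as a natural number
        set h : ℕ := k - t - 1 with hh
        have hhk : (h : ℤ) = (k : ℤ) - t - 1 := by omega
        have e1 : W ((h : ℤ) + 1) = W' ((h : ℤ) + 1) := (ih ((h : ℤ) + 1)).1 (by omega)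
        have e2 : W (-(h : ℤ) - 2) = W' (-(h : ℤ) - 2) := (ih (-(h : ℤ) - 2)).2 (by omega)
        constructor
        · intro hℓ
          rcases eq_or_lt_of_le hℓ with heq | hlt
          · have hℓh : ℓ = (h : ℤ) := by omega
            subst hℓh
            exact le_antisymm (step_pos hW hW' h (le_of_eq e1) (le_of_eq e2))
              (step_pos hW' hW h (le_of_eq e1.symm) (le_of_eq e2.symm))
          · exact (ih ℓ).1 (by omega)
        · intro hℓ
          rcases eq_or_lt_of_le hℓ with heq | hlt
          · have hℓh : ℓ = -(h : ℤ) - 1 := by omega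
            subst hℓh
            exact le_antisymm (step_neg hW hW' h (le_of_eq e1) (le_of_eq e2))
              (step_neg hW' hW h (le_of_eq e1.symm) (le_of_eq e2.symm))
          · exact (ih ℓ).2 (by omega)
      · -- t ≥ k : everything already covered by ih
        constructor
        · intro hℓ
          rcases le_or_gt ((k : ℤ) - t) ℓ with h1 | h1
          · exact (ih ℓ).1 h1
          · exact (ih ℓ).2 (by omega)
        · intro hℓ
          rcases le_or_gt ℓ (-(k : ℤ) + t - 1) with h1 | h1
          · exact (ih ℓ).2 h1
          · exact (ih ℓ).1 (by omega)
  funext ℓ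
  rcases le_or_gt 0 ℓ with h | h
  · exact (main k ℓ).1 (by omega)
  · exact (main k ℓ).2 (by omega)

end MonodromyAux

/-- Existence and uniqueness of the monodromy filtration of a nilpotent
endomorphism of a finite-dimensional complex vector space. -/
theorem monodromy_filtration_existsUnique
    (V : Type*) [AddCommGroup V] [Module ℂ V] [FiniteDimensional ℂ V]
    (N : V →ₗ[ℂ] V) (hN : IsNilpotent N) :
    ∃! W : ℤ → Submodule ℂ V, IsMonodromyFiltration N W := by
  exact ⟨MonodromyAux.Wf N, MonodromyAux.Wf_isMonodromy N hN,
    fun W' hW' => MonodromyAux.monodromy_unique hW' (MonodromyAux.Wf_isMonodromy N hN) hN⟩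
end

section
/- Let V be a finite-dimensional complex vector space, N a nilpotent endomorphism, and W_• its monodromy filtration. For ℓ ≥ 0, the primitive part P_ℓ := ker(N^{ℓ+1} : gr^W_ℓ → gr^W_{-ℓ-2}) is canonically isomorphic to the quotient ker(N^{ℓ+1}) / (ker(N^ℓ) + im(N) ∩ ker(N^{ℓ+1})). -/
section Aux

variable {V : Type*} [AddCommGroup V] [Module ℂ V] (N : V →ₗ[ℂ] V) (W : ℤ → Submodule ℂ V)

lemma pow_apply_add (a b : ℕ) (x : V) : (N ^ (a + b)) x = (N ^ a) ((N ^ b) x) := by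
  rw [pow_add, Module.End.mul_apply]

lemma Wmem_of_eq {i j : ℤ} (h : i = j) {x : V} (hx : x ∈ W i) : x ∈ W j := h ▸ hx

/-- Fact 0: `N^j (W t) ⊆ W (t - 2j)`. -/
lemma shift_pow (h4 : ∀ ℓ : ℤ, (W ℓ).map N ≤ W (ℓ - 2)) :
    ∀ (j : ℕ) (t : ℤ) (x : V), x ∈ W t → (N ^ j) x ∈ W (t - 2 * j) := by
  intro j
  induction j with
  | zero => intro t x hx; simpa using hx
  | succ j ih =>
    intro t x hx
    have h1 : (N ^ (j + 1)) x = N ((N ^ j) x) := by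
      rw [add_comm, pow_apply_add, pow_one]
    have h2 := ih t x hx
    have h3 := h4 (t - 2 * j) (Submodule.mem_map_of_mem h2)
    rw [h1]
    exact Wmem_of_eq W (by push_cast; ring) h3

/-- L1: `ker N^k ⊆ W (k-1)`. -/
lemma ker_le_W (hmono : Monotone W) (htop : ∃ b : ℤ, W b = ⊤)
    (h5a : ∀ ℓ : ℕ, ∀ x ∈ W (ℓ : ℤ), (N ^ ℓ) x ∈ W (-(ℓ : ℤ) - 1) → x ∈ W ((ℓ : ℤ) - 1)) :
    ∀ (k : ℕ) (x : V), (N ^ k) x = 0 → x ∈ W ((k : ℤ) - 1) := by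
  have helper : ∀ (c k : ℕ) (x : V), (N ^ k) x = 0 → x ∈ W ((k : ℤ) - 1 + c) →
      x ∈ W ((k : ℤ) - 1) := by
    intro c
    induction c with
    | zero => intro k x _ hx; simpa using hx
    | succ c ih =>
      intro k x hker hx
      have hx' : x ∈ W ((k + c : ℕ) : ℤ) := Wmem_of_eq W (by push_cast; ring) hx
      have hNx : (N ^ (k + c)) x = 0 := by
        rw [add_comm k c, pow_apply_add, hker, map_zero]
      have := h5a (k + c) x hx' (by rw [hNx]; exact Submodule.zero_mem _)
      exact ih k x hker (Wmem_of_eq W (by push_cast; ring) this)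
  intro k x hker
  obtain ⟨b, hb⟩ := htop
  refine helper (b - ((k : ℤ) - 1)).toNat k x hker ?_
  have hle : b ≤ (k : ℤ) - 1 + (b - ((k : ℤ) - 1)).toNat := by omega
  exact hmono hle (by rw [hb]; trivial)

/-- Lemma B: `W (-(m+1)) ⊆ N^q (W (2q - m - 1))` when `q ≤ m + 1`. -/
lemma W_le_pow_image (hmono : Monotone W) (hbot : ∃ a : ℤ, W a = ⊥)
    (h4 : ∀ ℓ : ℤ, (W ℓ).map N ≤ W (ℓ - 2))
    (h5b : ∀ ℓ : ℕ, ∀ y ∈ W (-(ℓ : ℤ)), ∃ x ∈ W (ℓ : ℤ), (N ^ ℓ) x - y ∈ W (-(ℓ : ℤ) - 1)) :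
    ∀ (m q : ℕ), q ≤ m + 1 → ∀ u ∈ W (-(m : ℤ) - 1),
      ∃ x ∈ W (2 * (q : ℤ) - m - 1), (N ^ q) x = u := by
  have key : ∀ (c m q : ℕ), q ≤ m + 1 → W (-(m : ℤ) - 1 - c) = ⊥ →
      ∀ u ∈ W (-(m : ℤ) - 1), ∃ x ∈ W (2 * (q : ℤ) - m - 1), (N ^ q) x = u := by
    intro c
    induction c with
    | zero =>
      intro m q _ hW0 u hu
      refine ⟨0, Submodule.zero_mem _, ?_⟩
      have : u = 0 := by
        have : u ∈ (⊥ : Submodule ℂ V) := hW0 ▸ Wmem_of_eq W (by ring) hu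
        simpa using this
      simp [this]
    | succ c ih =>
      intro m q hq hW0 u hu
      obtain ⟨x, hxW, hx⟩ := h5b (m + 1) u (Wmem_of_eq W (by push_cast; ring) hu)
      -- u₁ := u - N^{m+1} x ∈ W (-(m+1) - 1)
      have hu1 : u - (N ^ (m + 1)) x ∈ W (-((m + 1 : ℕ) : ℤ) - 1) := by
        have := Submodule.neg_mem _ hx
        simpa using this
      -- first part: N^{m+1} x = N^q (N^{m+1-q} x), with N^{m+1-q} x ∈ W (2q - m - 1)
      have hsplit : (N ^ (m + 1)) x = (N ^ q) ((N ^ (m + 1 - q)) x) := by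
        rw [← pow_apply_add]; congr 2; omega
      have hx2 : (N ^ (m + 1 - q)) x ∈ W (2 * (q : ℤ) - m - 1) := by
        have := shift_pow N W h4 (m + 1 - q) ((m + 1 : ℕ) : ℤ) x hxW
        exact Wmem_of_eq W (by push_cast [Nat.cast_sub hq]; omega) this
      -- second part via IH at m+1
      have hq' : q ≤ (m + 1) + 1 := by omega
      have hW0' : W (-((m + 1 : ℕ) : ℤ) - 1 - c) = ⊥ := by
        rw [show (-((m + 1 : ℕ) : ℤ) - 1 - c) = (-(m : ℤ) - 1 - (c + 1 : ℕ)) by push_cast; ring]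
        exact hW0
      obtain ⟨x', hx'W, hx'⟩ := ih (m + 1) q hq' hW0' _ hu1
      refine ⟨(N ^ (m + 1 - q)) x + x', Submodule.add_mem _ hx2 ?_, ?_⟩
      · exact hmono (by push_cast; omega) hx'W
      · rw [map_add, ← hsplit, hx']; ring_nf
        abel
  intro m q hq u hu
  obtain ⟨a, ha⟩ := hbot
  refine key (-(m : ℤ) - 1 - a).toNat m q hq ?_ u hu
  have : W (-(m : ℤ) - 1 - (-(m : ℤ) - 1 - a).toNat) ≤ W a := hmono (by omega)
  exact le_bot_iff.mp (ha ▸ this)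

/-- L4: if `N^q x ∈ W (-(m+1))` with `q ≤ m+1`, then `x` agrees with an element of
`ker N^q` modulo `W (2q - m - 2)`-ish; precisely `x - y ∈ W (2q - m - 1)`. -/
lemma ker_representative (hmono : Monotone W) (hbot : ∃ a : ℤ, W a = ⊥)
    (h4 : ∀ ℓ : ℤ, (W ℓ).map N ≤ W (ℓ - 2))
    (h5b : ∀ ℓ : ℕ, ∀ y ∈ W (-(ℓ : ℤ)), ∃ x ∈ W (ℓ : ℤ), (N ^ ℓ) x - y ∈ W (-(ℓ : ℤ) - 1))
    (m q : ℕ) (hq : q ≤ m + 1) (x : V) (hx : (N ^ q) x ∈ W (-(m : ℤ) - 1)) :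
    ∃ y : V, (N ^ q) y = 0 ∧ x - y ∈ W (2 * (q : ℤ) - m - 1) := by
  obtain ⟨x'', hx''W, hx''⟩ := W_le_pow_image N W hmono hbot h4 h5b m q hq _ hx
  refine ⟨x - x'', by rw [map_sub, hx'', sub_self], ?_⟩
  simpa using hx''W

/-- L3: `W (-k) ∩ ker N^j ⊆ N^k (ker N^{k+j})`. -/
lemma ker_inter_W_le (hmono : Monotone W) (hbot : ∃ a : ℤ, W a = ⊥)
    (h4 : ∀ ℓ : ℤ, (W ℓ).map N ≤ W (ℓ - 2))
    (h5b : ∀ ℓ : ℕ, ∀ y ∈ W (-(ℓ : ℤ)), ∃ x ∈ W (ℓ : ℤ), (N ^ ℓ) x - y ∈ W (-(ℓ : ℤ) - 1))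
    (j : ℕ) :
    ∀ (k : ℕ) (u : V), u ∈ W (-(k : ℤ)) → (N ^ j) u = 0 →
      ∃ z : V, (N ^ (k + j)) z = 0 ∧ (N ^ k) z = u := by
  have key : ∀ (c k : ℕ) (u : V), u ∈ W (-(k : ℤ)) → (N ^ j) u = 0 →
      W (-(k : ℤ) - c) = ⊥ →
      ∃ z : V, (N ^ (k + j)) z = 0 ∧ (N ^ k) z = u := by
    intro c
    induction c with
    | zero =>
      intro k u hu hju hW0
      have : u = 0 := by
        have : u ∈ (⊥ : Submodule ℂ V) := hW0 ▸ Wmem_of_eq W (by ring) hu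
        simpa using this
      exact ⟨0, by simp, by simp [this]⟩
    | succ c ih =>
      intro k u hu hju hW0
      obtain ⟨x, hxW, hx⟩ := h5b k u hu
      set u₁ := (N ^ k) x - u with hu₁def
      have hu₁ : u₁ ∈ W (-(k : ℤ) - 1) := hx
      -- N^{k+j} x ∈ W (-(k + 2j) - 1)
      have hNx : (N ^ (k + j)) x ∈ W (-((k + 2 * j : ℕ) : ℤ) - 1) := by
        have h1 : (N ^ (k + j)) x = (N ^ j) u₁ := by
          rw [add_comm, pow_apply_add, hu₁def, map_sub, hju, sub_zero]
        have h2 := shift_pow N W h4 j (-(k : ℤ) - 1) u₁ hu₁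
        rw [h1]
        exact Wmem_of_eq W (by push_cast; ring) h2
      obtain ⟨y, hyker, hyW⟩ := ker_representative N W hmono hbot h4 h5b
        (k + 2 * j) (k + j) (by omega) x hNx
      -- u₂ := u - N^k y ∈ W (-(k+1)), killed by N^j
      have hxy : (N ^ k) (x - y) ∈ W (-(k : ℤ) - 1) := by
        have := shift_pow N W h4 k (2 * ((k : ℤ) + j) - (k + 2 * j) - 1) (x - y)
          (Wmem_of_eq W (by push_cast; ring) hyW)
        exact Wmem_of_eq W (by push_cast; ring) this
      have hu₂W : u - (N ^ k) y ∈ W (-((k + 1 : ℕ) : ℤ)) := by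
        have : u - (N ^ k) y = (N ^ k) (x - y) - u₁ := by
          rw [hu₁def, map_sub]; abel
        rw [this]
        exact Wmem_of_eq W (by push_cast; ring)
          (Submodule.sub_mem _ hxy hu₁)
      have hu₂j : (N ^ j) (u - (N ^ k) y) = 0 := by
        rw [map_sub, hju, ← pow_apply_add, add_comm j k, hyker, zero_sub, neg_zero]
      have hW0' : W (-((k + 1 : ℕ) : ℤ) - c) = ⊥ := by
        rw [show (-((k + 1 : ℕ) : ℤ) - c) = (-(k : ℤ) - (c + 1 : ℕ)) by push_cast; ring]
        exact hW0
      obtain ⟨z₁, hz₁ker, hz₁⟩ := ih (k + 1) (u - (N ^ k) y) hu₂W hu₂j hW0'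
      refine ⟨y + N z₁, ?_, ?_⟩
      · rw [map_add, hyker, zero_add, ← Module.End.mul_apply, ← pow_succ,
          show k + j + 1 = k + 1 + j by omega, hz₁ker]
      · rw [map_add, ← Module.End.mul_apply, ← pow_succ, hz₁]
        abel
  intro k u hu hju
  obtain ⟨a, ha⟩ := hbot
  refine key (-(k : ℤ) - a).toNat k u hu hju ?_
  have : W (-(k : ℤ) - (-(k : ℤ) - a).toNat) ≤ W a := hmono (by omega)
  exact le_bot_iff.mp (ha ▸ this)

end Aux

/-- The primitive part `P_ℓ = ker (N^{ℓ+1} : gr^W_ℓ → gr^W_{-ℓ-2})` is canonically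
isomorphic to `ker N^{ℓ+1} / (ker N^ℓ + im N ∩ ker N^{ℓ+1})`, the isomorphism being
induced by the inclusion `ker N^{ℓ+1} ⊆ W ℓ` followed by the projection to `gr^W_ℓ`.
This is expressed at the level of elements: the composite map
`ker N^{ℓ+1} → gr^W_ℓ` has image exactly `P_ℓ` (second clause) and kernel exactly
`ker N^ℓ ⊔ (im N ⊓ ker N^{ℓ+1})` (third clause), so the first isomorphism theorem
produces the canonical isomorphism. -/
theorem primitive_part_canonical_iso
    (V : Type*) [AddCommGroup V] [Module ℂ V] [FiniteDimensional ℂ V]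
    (N : V →ₗ[ℂ] V) (hN : IsNilpotent N)
    (W : ℤ → Submodule ℂ V) (hW : IsMonodromyFiltration N W) (ℓ : ℕ) :
    LinearMap.ker (N ^ (ℓ + 1)) ≤ W (ℓ : ℤ) ∧
    (∀ x ∈ W (ℓ : ℤ),
      ((N ^ (ℓ + 1)) x ∈ W (-(ℓ : ℤ) - 3) ↔
        ∃ y ∈ LinearMap.ker (N ^ (ℓ + 1)), x - y ∈ W ((ℓ : ℤ) - 1))) ∧
    (∀ x ∈ LinearMap.ker (N ^ (ℓ + 1)),
      (x ∈ W ((ℓ : ℤ) - 1) ↔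
        x ∈ LinearMap.ker (N ^ ℓ) ⊔
          (LinearMap.range N ⊓ LinearMap.ker (N ^ (ℓ + 1))))) := by
  obtain ⟨hmono, hbot, htop, h4, h5⟩ := hW
  have h5a : ∀ ℓ : ℕ, ∀ x ∈ W (ℓ : ℤ), (N ^ ℓ) x ∈ W (-(ℓ : ℤ) - 1) → x ∈ W ((ℓ : ℤ) - 1) :=
    fun ℓ => (h5 ℓ).1
  have h5b : ∀ ℓ : ℕ, ∀ y ∈ W (-(ℓ : ℤ)), ∃ x ∈ W (ℓ : ℤ), (N ^ ℓ) x - y ∈ W (-(ℓ : ℤ) - 1) :=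
    fun ℓ => (h5 ℓ).2
  have kerW : ∀ (k : ℕ) (x : V), (N ^ k) x = 0 → x ∈ W ((k : ℤ) - 1) :=
    ker_le_W N W hmono htop h5a
  refine ⟨?_, ?_, ?_⟩
  · -- Claim 1
    intro x hx
    have := kerW (ℓ + 1) x (LinearMap.mem_ker.mp hx)
    exact Wmem_of_eq W (by push_cast; ring) this
  · -- Claim 2
    intro x _
    constructor
    · intro hx
      obtain ⟨y, hyker, hyW⟩ := ker_representative N W hmono hbot h4 h5b
        (ℓ + 2) (ℓ + 1) (by omega) x
        (Wmem_of_eq W (by push_cast; ring) hx)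
      exact ⟨y, LinearMap.mem_ker.mpr hyker, Wmem_of_eq W (by push_cast; ring) hyW⟩
    · rintro ⟨y, hyker, hyW⟩
      have h1 : (N ^ (ℓ + 1)) x = (N ^ (ℓ + 1)) (x - y) := by
        rw [map_sub, LinearMap.mem_ker.mp hyker, sub_zero]
      have h2 := shift_pow N W h4 (ℓ + 1) ((ℓ : ℤ) - 1) (x - y) hyW
      rw [h1]
      exact Wmem_of_eq W (by push_cast; ring) h2
  · -- Claim 3
    intro x hxker
    constructor
    · intro hxW
      have hu : (N ^ ℓ) x ∈ W (-((ℓ + 1 : ℕ) : ℤ)) := by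
        have := shift_pow N W h4 ℓ ((ℓ : ℤ) - 1) x hxW
        exact Wmem_of_eq W (by push_cast; ring) this
      have hju : (N ^ 1) ((N ^ ℓ) x) = 0 := by
        rw [pow_one, ← Module.End.mul_apply, ← pow_succ']
        exact LinearMap.mem_ker.mp hxker
      obtain ⟨z, hzker, hz⟩ := ker_inter_W_le N W hmono hbot h4 h5b 1 (ℓ + 1)
        ((N ^ ℓ) x) hu hju
      -- x = (x - N z) + N z
      have hb : N z ∈ LinearMap.range N ⊓ LinearMap.ker (N ^ (ℓ + 1)) := by
        refine ⟨⟨z, rfl⟩, LinearMap.mem_ker.mpr ?_⟩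
        rw [← Module.End.mul_apply, ← pow_succ]
        exact hzker
      have ha : x - N z ∈ LinearMap.ker (N ^ ℓ) := by
        refine LinearMap.mem_ker.mpr ?_
        rw [map_sub, ← Module.End.mul_apply, ← pow_succ, hz, sub_self]
      have : x = (x - N z) + N z := by abel
      rw [this]
      exact Submodule.add_mem_sup ha hb
    · intro hx
      rw [Submodule.mem_sup] at hx
      obtain ⟨a, ha, b, hb, rfl⟩ := hx
      have haW : a ∈ W ((ℓ : ℤ) - 1) := kerW ℓ a (LinearMap.mem_ker.mp ha)
      obtain ⟨⟨w, hw⟩, hbker⟩ := hb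
      have hwker : (N ^ (ℓ + 2)) w = 0 := by
        rw [show ℓ + 2 = (ℓ + 1) + 1 by omega, pow_succ, Module.End.mul_apply, hw]
        exact LinearMap.mem_ker.mp hbker
      have hwW : w ∈ W (((ℓ + 2 : ℕ) : ℤ) - 1) := kerW (ℓ + 2) w hwker
      have hbW : b ∈ W ((ℓ : ℤ) - 1) := by
        have := h4 (((ℓ + 2 : ℕ) : ℤ) - 1) (Submodule.mem_map_of_mem hwW)
        rw [hw] at this
        exact Wmem_of_eq W (by push_cast; ring) this
      exact Submodule.add_mem _ haW hbW
end

section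
/- Let H be a finitely generated module over the ring ℂ⟦t⟧ of formal power series, equipped with an additive map ∇ : H → H satisfying ∇(g·m) = g·∇(m) + t g'·m for all g ∈ ℂ⟦t⟧, m ∈ H. Suppose there exist polynomials b₁, b₂ ∈ ℂ[s] with all roots in the real interval [0,1) such that b₁(∇)(H) ⊆ tH and b₂(∇+1) annihilates ker(t : H → H). Then multiplication by t is injective on H, i.e. H is torsion-free, hence free. -/
/-- Scalar multiplication by the constant power series `C α` as an additive
endomorphism of a module over `ℂ⟦t⟧`. -/
noncomputable def smulConst {H : Type*} [AddCommGroup H]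
    [Module (PowerSeries ℂ) H] (α : ℂ) : AddMonoid.End H :=
  DistribMulAction.toAddMonoidEnd (PowerSeries ℂ) H (PowerSeries.C α)

open Polynomial

namespace LogConnAux

lemma smulConst_apply {H : Type*} [AddCommGroup H] [Module (PowerSeries ℂ) H]
    (α : ℂ) (x : H) : smulConst α x = (PowerSeries.C α) • x := rfl

lemma isCoprime_X_sub_C_list (a : ℂ) (B : List ℂ) (h : ∀ b ∈ B, a ≠ b) :
    IsCoprime (X - C a) ((B.map fun b => X - C b).prod) := by
  induction B with
  | nil => simpa using isCoprime_one_right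
  | cons b B ih =>
      simp only [List.map_cons, List.prod_cons]
      exact IsCoprime.mul_right
        (Polynomial.isCoprime_X_sub_C_of_isUnit_sub
          (isUnit_iff_ne_zero.mpr (sub_ne_zero_of_ne (h b (by simp)))))
        (ih fun b hb => h b (by simp [hb]))

lemma isCoprime_list_prod (A B : List ℂ) (h : ∀ a ∈ A, ∀ b ∈ B, a ≠ b) :
    IsCoprime ((A.map fun a => X - C a).prod) ((B.map fun b => X - C b).prod) := by
  induction A with
  | nil => simpa using isCoprime_one_left
  | cons a A ih =>
      simp only [List.map_cons, List.prod_cons]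
      exact IsCoprime.mul_left (isCoprime_X_sub_C_list a B (h a (by simp)))
        (ih fun a ha => h a (by simp [ha]))

lemma cop (l₁ l₂ : List ℂ)
    (hl₁ : ∀ α ∈ l₁, α.im = 0 ∧ 0 ≤ α.re ∧ α.re < 1)
    (hl₂ : ∀ α ∈ l₂, α.im = 0 ∧ 0 ≤ α.re ∧ α.re < 1) (k : ℕ) :
    IsCoprime ((l₁.map fun α => X - C (α + (k:ℂ))).prod)
      ((l₂.map fun α => X - C (α - 1)).prod) := by
  have e₁ : (l₁.map fun α => X - C (α + (k:ℂ))) = ((l₁.map (· + (k:ℂ))).map fun a => X - C a) := by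
    rw [List.map_map]; rfl
  have e₂ : (l₂.map fun α => X - C (α - 1)) = ((l₂.map (· - (1:ℂ))).map fun a => X - C a) := by
    rw [List.map_map]; rfl
  rw [e₁, e₂]
  refine isCoprime_list_prod _ _ ?_
  intro a ha b hb
  simp only [List.mem_map] at ha hb
  obtain ⟨α, hα, rfl⟩ := ha
  obtain ⟨β, hβ, rfl⟩ := hb
  intro hcontra
  have h1 := (hl₁ α hα).2.1
  have h2 := (hl₂ β hβ).2.2
  have : (α + (k:ℂ)).re = (β - 1).re := by rw [hcontra]
  simp only [Complex.add_re, Complex.sub_re, Complex.natCast_re, Complex.one_re] at this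
  have hk : (0:ℝ) ≤ (k:ℝ) := Nat.cast_nonneg k
  linarith

variable {H : Type*} [AddCommGroup H] [Module (PowerSeries ℂ) H] [Module ℂ H]

noncomputable def Dlin
    (hsmul : ∀ (α : ℂ) (m : H), α • m = (PowerSeries.C α) • m)
    (D : AddMonoid.End H)
    (hLeib : ∀ (g : PowerSeries ℂ) (m : H),
      D (g • m) = g • D m
        + ((PowerSeries.X : PowerSeries ℂ) * PowerSeries.derivative ℂ g) • m) :
    Module.End ℂ H where
  toFun := D
  map_add' := map_add D
  map_smul' := by
    intro α m
    simp only [RingHom.id_apply]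
    rw [hsmul, hsmul, hLeib, PowerSeries.derivative_C, mul_zero, zero_smul, add_zero]

theorem main [Module.Finite (PowerSeries ℂ) H]
    (hsmul : ∀ (α : ℂ) (m : H), α • m = (PowerSeries.C α) • m)
    (D : AddMonoid.End H)
    (hLeib : ∀ (g : PowerSeries ℂ) (m : H),
      D (g • m) = g • D m
        + ((PowerSeries.X : PowerSeries ℂ) * PowerSeries.derivative ℂ g) • m)
    (l₁ l₂ : List ℂ)
    (hl₁ : ∀ α ∈ l₁, α.im = 0 ∧ 0 ≤ α.re ∧ α.re < 1)
    (hl₂ : ∀ α ∈ l₂, α.im = 0 ∧ 0 ≤ α.re ∧ α.re < 1)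
    (hb₁ : ∀ m : H, ∃ m' : H,
      (((l₁.map (fun α => D - smulConst α)).prod : AddMonoid.End H)) m
        = (PowerSeries.X : PowerSeries ℂ) • m')
    (hb₂ : ∀ m : H, (PowerSeries.X : PowerSeries ℂ) • m = 0 →
      (((l₂.map (fun α => D + 1 - smulConst α)).prod : AddMonoid.End H)) m = 0) :
    ∀ m : H, (PowerSeries.X : PowerSeries ℂ) • m = 0 → m = 0 := by
  set Dl := Dlin hsmul D hLeib with hDl
  have hDl_apply : ∀ x : H, Dl x = D x := fun _ => rfl
  have hcomm : ∀ (c : ℂ) (g : PowerSeries ℂ) (w : H), c • (g • w) = g • (c • w) := by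
    intro c g w
    rw [hsmul, hsmul, smul_smul, smul_smul, mul_comm]
  have hD1 : ∀ m : H, D ((PowerSeries.X : PowerSeries ℂ) • m)
      = (PowerSeries.X : PowerSeries ℂ) • D m + (PowerSeries.X : PowerSeries ℂ) • m := by
    intro m
    rw [hLeib, PowerSeries.derivative_X, mul_one]
  have hDk : ∀ (k : ℕ) (w : H), D ((PowerSeries.X ^ k : PowerSeries ℂ) • w)
      = (PowerSeries.X ^ k : PowerSeries ℂ) • D w
        + (k : ℂ) • ((PowerSeries.X ^ k : PowerSeries ℂ) • w) := by
    intro k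
    induction k with
    | zero => intro w; simp
    | succ k ih =>
        intro w
        rw [pow_succ', mul_smul, hD1, ih, smul_add, ← mul_smul, ← pow_succ',
          ← hcomm ((k : ℂ)) PowerSeries.X _]
        push_cast
        rw [add_smul, one_smul, pow_succ', mul_smul]
        abel
  have expand : ∀ (L : List ℂ) (f : ℂ → ℂ),
      Polynomial.aeval Dl ((L.map fun α => X - C (f α)).prod)
        = (L.map fun α => Dl - algebraMap ℂ (Module.End ℂ H) (f α)).prod := by
    intro L f
    rw [map_list_prod, List.map_map]
    congr 1
    refine List.map_congr_left fun α _ => ?_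
    simp [Function.comp, map_sub, aeval_X, aeval_C]
  have prodeq : ∀ (L : List ℂ) (u : ℂ → Module.End ℂ H) (v : ℂ → AddMonoid.End H),
      (∀ α (x : H), u α x = v α x) → ∀ x : H, (L.map u).prod x = (L.map v).prod x := by
    intro L u v h
    induction L with
    | nil => intro x; rfl
    | cons a L ih =>
        intro x
        simp only [List.map_cons, List.prod_cons]
        show u a ((L.map u).prod x) = v a ((L.map v).prod x)
        rw [ih x, h]
  have factor : ∀ (k : ℕ) (c : ℂ) (w : H),
      (Dl - algebraMap ℂ (Module.End ℂ H) (c + k)) ((PowerSeries.X ^ k : PowerSeries ℂ) • w)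
        = (PowerSeries.X ^ k : PowerSeries ℂ) • ((Dl - algebraMap ℂ (Module.End ℂ H) c) w) := by
    intro k c w
    rw [LinearMap.sub_apply, LinearMap.sub_apply, Module.algebraMap_end_apply,
      Module.algebraMap_end_apply, hDl_apply, hDl_apply, hDk, add_smul, smul_sub,
      hcomm c _ w]
    abel
  have shift : ∀ (k : ℕ) (L : List ℂ) (w : H),
      ((L.map fun α => Dl - algebraMap ℂ (Module.End ℂ H) (α + (k:ℂ))).prod)
          ((PowerSeries.X ^ k : PowerSeries ℂ) • w)
        = (PowerSeries.X ^ k : PowerSeries ℂ) •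
          (((L.map fun α => Dl - algebraMap ℂ (Module.End ℂ H) α).prod) w) := by
    intro k L
    induction L with
    | nil => intro w; rfl
    | cons a L ih =>
        intro w
        simp only [List.map_cons, List.prod_cons]
        show (Dl - algebraMap ℂ (Module.End ℂ H) (a + (k:ℂ)))
            (((L.map fun α => Dl - algebraMap ℂ (Module.End ℂ H) (α + (k:ℂ))).prod)
              ((PowerSeries.X ^ k : PowerSeries ℂ) • w)) = _
        rw [ih w, factor]
        rfl
  have inv : ∀ (q : ℂ[X]) (j : ℕ) (w : H), ∃ w' : H,
      (Polynomial.aeval Dl q) ((PowerSeries.X ^ j : PowerSeries ℂ) • w)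
        = (PowerSeries.X ^ j : PowerSeries ℂ) • w' := by
    intro q
    induction q using Polynomial.induction_on with
    | C c =>
        intro j w
        refine ⟨(PowerSeries.C c) • w, ?_⟩
        rw [aeval_C, Module.algebraMap_end_apply, hcomm, hsmul]
    | add p q hp hq =>
        intro j w
        obtain ⟨w1, h1⟩ := hp j w
        obtain ⟨w2, h2⟩ := hq j w
        exact ⟨w1 + w2, by rw [map_add, LinearMap.add_apply, h1, h2, smul_add]⟩
    | monomial n c ih =>
        intro j w
        have hrw : (C c * X ^ (n + 1) : ℂ[X]) = (C c * X ^ n) * X := by ring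
        rw [hrw, map_mul, aeval_X, Module.End.mul_apply]
        have h1 : Dl ((PowerSeries.X ^ j : PowerSeries ℂ) • w)
            = (PowerSeries.X ^ j : PowerSeries ℂ) • (D w + (j : ℂ) • w) := by
          rw [hDl_apply, hDk, smul_add, hcomm]
        rw [h1]
        exact ih j _
  -- the key induction: every torsion element lies in X^k • H for all k
  have key : ∀ (k : ℕ) (m : H), (PowerSeries.X : PowerSeries ℂ) • m = 0 →
      ∃ w : H, m = (PowerSeries.X ^ k : PowerSeries ℂ) • w := by
    intro k
    induction k with
    | zero => exact fun m _ => ⟨m, by rw [pow_zero, one_smul]⟩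
    | succ k ih =>
        intro m hm
        obtain ⟨w, hw⟩ := ih m hm
        obtain ⟨u, v, huv⟩ := cop l₁ l₂ hl₁ hl₂ k
        have h₂ : (Polynomial.aeval Dl ((l₂.map fun α => X - C (α - 1)).prod)) m = 0 := by
          rw [expand l₂ (fun α => α - 1)]
          rw [prodeq l₂ _ (fun α => D + 1 - smulConst α) ?_ m]
          · exact hb₂ m hm
          · intro α x
            rw [LinearMap.sub_apply, Module.algebraMap_end_apply, hDl_apply, hsmul,
              map_sub, map_one, sub_smul, one_smul]
            show D x - ((PowerSeries.C α) • x - x) = ((D + 1 - smulConst α : AddMonoid.End H)) x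
            show D x - ((PowerSeries.C α) • x - x) = D x + (1 : AddMonoid.End H) x - smulConst α x
            rw [AddMonoid.End.one_apply,
              smulConst_apply]
            abel
        have h₁ : ∃ w' : H, (Polynomial.aeval Dl ((l₁.map fun α => X - C (α + (k:ℂ))).prod)) m
            = (PowerSeries.X ^ (k+1) : PowerSeries ℂ) • w' := by
          obtain ⟨m', hm'⟩ := hb₁ w
          refine ⟨m', ?_⟩
          rw [expand l₁ (fun α => α + (k:ℂ)), hw, shift k l₁ w]
          rw [prodeq l₁ _ (fun α => D - smulConst α) ?_ w]
          · rw [hm', ← mul_smul, ← pow_succ]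
          · intro α x
            rw [LinearMap.sub_apply, Module.algebraMap_end_apply, hDl_apply, hsmul]
            show D x - PowerSeries.C α • x = D x - smulConst α x
            rw [smulConst_apply]
        obtain ⟨w', hw'⟩ := h₁
        have hid : (Polynomial.aeval Dl (u * (l₁.map fun α => X - C (α + (k:ℂ))).prod
            + v * (l₂.map fun α => X - C (α - 1)).prod)) m = m := by
          rw [huv, map_one, Module.End.one_apply]
        rw [map_add, map_mul, map_mul, LinearMap.add_apply, Module.End.mul_apply,
          Module.End.mul_apply, hw', h₂, map_zero, add_zero] at hid
        obtain ⟨w'', hw''⟩ := inv u (k+1) w'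
        exact ⟨w'', by rw [← hid, hw'']⟩
  intro m hm
  have hne : (Ideal.span ({PowerSeries.X} : Set (PowerSeries ℂ))) ≠ ⊤ := by
    intro htop
    have : IsUnit (PowerSeries.X : PowerSeries ℂ) :=
      (Ideal.span_singleton_eq_top).mp htop
    rw [PowerSeries.isUnit_iff_constantCoeff, PowerSeries.constantCoeff_X] at this
    simp at this
  obtain ⟨n, f, hf⟩ := Module.Finite.exists_fin' (PowerSeries ℂ) H
  let e := f.quotKerEquivOfSurjective hf
  have hbot := Ideal.iInf_pow_smul_eq_bot_of_isLocalRing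
    (M := (Fin n → PowerSeries ℂ) ⧸ LinearMap.ker f)
    (Ideal.span ({PowerSeries.X} : Set (PowerSeries ℂ))) hne
  have hmem : e.symm m ∈ (⊥ : Submodule (PowerSeries ℂ)
      ((Fin n → PowerSeries ℂ) ⧸ LinearMap.ker f)) := by
    rw [← hbot, Submodule.mem_iInf]
    intro i
    obtain ⟨w, hw⟩ := key i m hm
    have : e.symm m = (PowerSeries.X ^ i : PowerSeries ℂ) • e.symm w := by
      rw [hw, map_smul]
    rw [this, Ideal.span_singleton_pow]
    exact Submodule.smul_mem_smul (Ideal.mem_span_singleton_self _) trivial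
  have : e.symm m = 0 := (Submodule.mem_bot (PowerSeries ℂ)).mp hmem
  have := congrArg e this
  simpa using this

end LogConnAux

/-- Let `H` be a finitely generated module over `ℂ⟦t⟧` with an additive operator
`∇` satisfying the logarithmic Leibniz rule `∇(g•m) = g•∇m + (t g')•m`.  If there
are (nonzero) polynomials `b₁ = ∏ (s - α)`, `b₂ = ∏ (s - α)` (given by their lists
of roots, all real and lying in `[0,1)`) such that `b₁(∇) H ⊆ t H` and `b₂(∇ + 1)`
kills `ker (t : H → H)`, then multiplication by `t` is injective on `H`; hence `H`
is torsion-free and therefore free. -/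
theorem log_connection_torsion_free
    (H : Type*) [AddCommGroup H] [Module (PowerSeries ℂ) H]
    [Module.Finite (PowerSeries ℂ) H]
    (D : AddMonoid.End H)
    (hLeib : ∀ (g : PowerSeries ℂ) (m : H),
      D (g • m) = g • D m
        + ((PowerSeries.X : PowerSeries ℂ) * PowerSeries.derivative ℂ g) • m)
    (l₁ l₂ : List ℂ)
    (hl₁ : ∀ α ∈ l₁, α.im = 0 ∧ 0 ≤ α.re ∧ α.re < 1)
    (hl₂ : ∀ α ∈ l₂, α.im = 0 ∧ 0 ≤ α.re ∧ α.re < 1)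
    (hb₁ : ∀ m : H, ∃ m' : H,
      (((l₁.map (fun α => D - smulConst α)).prod : AddMonoid.End H)) m
        = (PowerSeries.X : PowerSeries ℂ) • m')
    (hb₂ : ∀ m : H, (PowerSeries.X : PowerSeries ℂ) • m = 0 →
      (((l₂.map (fun α => D + 1 - smulConst α)).prod : AddMonoid.End H)) m = 0) :
    (∀ m : H, (PowerSeries.X : PowerSeries ℂ) • m = 0 → m = 0) ∧
    Module.Free (PowerSeries ℂ) H := by
  letI : Module ℂ H := Module.compHom H (PowerSeries.C : ℂ →+* PowerSeries ℂ)
  have htf : ∀ m : H, (PowerSeries.X : PowerSeries ℂ) • m = 0 → m = 0 :=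
    LogConnAux.main (fun _ _ => rfl) D hLeib l₁ l₂ hl₁ hl₂ hb₁ hb₂
  refine ⟨htf, ?_⟩
  -- torsion-freeness for arbitrary nonzero scalars
  have hunit : ∀ (g : PowerSeries ℂ) (m : H), IsUnit g → g • m = 0 → m = 0 := by
    rintro g m ⟨u, rfl⟩ h
    have := congrArg (fun x => ((↑u⁻¹ : PowerSeries ℂ)) • x) h
    simpa [smul_smul] using this
  have hcoeff : ∀ (i : ℕ) (g : PowerSeries ℂ) (m : H),
      PowerSeries.coeff i g ≠ 0 → g • m = 0 → m = 0 := by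
    intro i
    induction i with
    | zero =>
        intro g m hg h
        refine hunit g m ?_ h
        rw [PowerSeries.isUnit_iff_constantCoeff]
        rw [← PowerSeries.coeff_zero_eq_constantCoeff_apply]
        exact isUnit_iff_ne_zero.mpr hg
    | succ i ih =>
        intro g m hg h
        by_cases h0 : PowerSeries.constantCoeff g = 0
        · obtain ⟨g', rfl⟩ := PowerSeries.X_dvd_iff.mpr h0
          have hX : (PowerSeries.X : PowerSeries ℂ) • (g' • m) = 0 := by
            rwa [smul_smul]
          have hg' : g' • m = 0 := htf _ hX
          refine ih g' m ?_ hg'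
          rwa [PowerSeries.coeff_succ_X_mul] at hg
        · refine hunit g m ?_ h
          rw [PowerSeries.isUnit_iff_constantCoeff]
          exact isUnit_iff_ne_zero.mpr h0
  haveI : NoZeroSMulDivisors (PowerSeries ℂ) H := by
    refine ⟨fun {g m} h => ?_⟩
    by_cases hg : g = 0
    · exact Or.inl hg
    · refine Or.inr ?_
      obtain ⟨i, hi⟩ : ∃ i, PowerSeries.coeff i g ≠ 0 := by
        by_contra hc
        push_neg at hc
        exact hg (PowerSeries.ext hc)
      exact hcoeff i g m hi h
  infer_instance
end

section
/- Let V be a finite-dimensional complex vector space carrying a representation of sl₂(ℂ) × sl₂(ℂ) with triples (X₁,Y₁,H₁) and (X₂,Y₂,H₂), and let d ∈ End(V) satisfy d² = 0, [H₁,d] = d, [H₂,d] = −d, [X₁,d] = 0, [Y₂,d] = 0. Define d* = [X₂, [Y₁, d]]. Then the Laplace operator Δ = d d* + d* d commutes with the entire sl₂ × sl₂ action: [X₁, Δ] = [Y₁, Δ] = [X₂, Δ] = [Y₂, Δ] = 0. -/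
section

attribute [local instance] LieRing.ofAssociativeRing

open IsSl2Triple in
lemma sl2_aux {V : Type*} [AddCommGroup V] [Module ℂ V] [FiniteDimensional ℂ V]
    (h e f m : Module.End ℂ V) (hne : h ≠ 0)
    (hef : ⁅e, f⁆ = h) (hhe : ⁅h, e⁆ = 2 • e) (hhf : ⁅h, f⁆ = -(2 • f))
    (μ : ℂ) (hμ : ∀ n : ℕ, μ ≠ n)
    (hm : ⁅h, m⁆ = μ • m) (hem : ⁅e, m⁆ = 0) : m = 0 := by
  by_contra hm0
  have t : IsSl2Triple h e f := ⟨hne, hef, hhe, hhf⟩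
  have P : t.HasPrimitiveVectorWith m μ := ⟨hm0, hm, hem⟩
  obtain ⟨n, hn⟩ := P.exists_nat
  exact hμ n hn

lemma lie_mul' {A : Type*} [Ring A] (a x y : A) : ⁅a, x * y⁆ = ⁅a, x⁆ * y + x * ⁅a, y⁆ := by
  simp only [Ring.lie_def]; noncomm_ring

lemma anti_lem {A : Type*} [Ring A] (a x : A) (hx : x * x = 0) :
    x * ⁅a, x⁆ + ⁅a, x⁆ * x = 0 := by
  simp only [Ring.lie_def, mul_sub, sub_mul, ← mul_assoc, hx]
  rw [mul_assoc a x x, hx]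
  simp

end

/-- Let `V` carry a representation of `sl₂(ℂ) × sl₂(ℂ)` via two commuting
`sl₂`-triples `(X₁, Y₁, H₁)` and `(X₂, Y₂, H₂)`, and let `d` be an endomorphism
with `d² = 0`, `[H₁, d] = d`, `[H₂, d] = −d`, `[X₁, d] = 0`, `[Y₂, d] = 0`.
Then the Laplace operator `Δ = d d* + d* d`, with `d* = [X₂, [Y₁, d]]`, commutes
with the whole `sl₂ × sl₂`-action. -/
theorem laplacian_commutes_with_sl2_action
    (V : Type*) [AddCommGroup V] [Module ℂ V] [FiniteDimensional ℂ V]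
    (X₁ Y₁ H₁ X₂ Y₂ H₂ d : Module.End ℂ V)
    (h₁ : ⁅X₁, Y₁⁆ = H₁) (h₂ : ⁅H₁, X₁⁆ = 2 • X₁) (h₃ : ⁅H₁, Y₁⁆ = -(2 • Y₁))
    (h₄ : ⁅X₂, Y₂⁆ = H₂) (h₅ : ⁅H₂, X₂⁆ = 2 • X₂) (h₆ : ⁅H₂, Y₂⁆ = -(2 • Y₂))
    (hcomm : ∀ a ∈ ({X₁, Y₁, H₁} : Set (Module.End ℂ V)),
      ∀ b ∈ ({X₂, Y₂, H₂} : Set (Module.End ℂ V)), ⁅a, b⁆ = 0)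
    (hd2 : d * d = 0)
    (hH₁d : ⁅H₁, d⁆ = d) (hH₂d : ⁅H₂, d⁆ = -d)
    (hX₁d : ⁅X₁, d⁆ = 0) (hY₂d : ⁅Y₂, d⁆ = 0) :
    ⁅X₁, d * ⁅X₂, ⁅Y₁, d⁆⁆ + ⁅X₂, ⁅Y₁, d⁆⁆ * d⁆ = 0 ∧
    ⁅Y₁, d * ⁅X₂, ⁅Y₁, d⁆⁆ + ⁅X₂, ⁅Y₁, d⁆⁆ * d⁆ = 0 ∧
    ⁅X₂, d * ⁅X₂, ⁅Y₁, d⁆⁆ + ⁅X₂, ⁅Y₁, d⁆⁆ * d⁆ = 0 ∧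
    ⁅Y₂, d * ⁅X₂, ⁅Y₁, d⁆⁆ + ⁅X₂, ⁅Y₁, d⁆⁆ * d⁆ = 0 := by
  letI : LieRing (Module.End ℂ V) := LieRing.ofAssociativeRing
  -- degenerate cases
  rcases eq_or_ne H₁ 0 with hH₁0 | hH₁0
  · have hd0 : d = 0 := by rw [← hH₁d, hH₁0, zero_lie]
    simp [hd0]
  rcases eq_or_ne H₂ 0 with hH₂0 | hH₂0
  · have hd0 : d = 0 := by have := hH₂d; rw [hH₂0, zero_lie] at this; simpa using this.symm
    simp [hd0]
  -- commutation relations between the two triples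
  have cX₁X₂ : ⁅X₁, X₂⁆ = 0 := hcomm X₁ (by simp) X₂ (by simp)
  have cY₁X₂ : ⁅Y₁, X₂⁆ = 0 := hcomm Y₁ (by simp) X₂ (by simp)
  have cY₁Y₂ : ⁅Y₁, Y₂⁆ = 0 := hcomm Y₁ (by simp) Y₂ (by simp)
  have cY₁H₂ : ⁅Y₁, H₂⁆ = 0 := hcomm Y₁ (by simp) H₂ (by simp)
  have cX₂Y₁ : ⁅X₂, Y₁⁆ = 0 := by rw [← lie_skew, cY₁X₂, neg_zero]
  have cY₂Y₁ : ⁅Y₂, Y₁⁆ = 0 := by rw [← lie_skew, cY₁Y₂, neg_zero]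
  have cH₂Y₁ : ⁅H₂, Y₁⁆ = 0 := by rw [← lie_skew, cY₁H₂, neg_zero]
  have hY₂X₂ : ⁅Y₂, X₂⁆ = -H₂ := by rw [← lie_skew, h₄]
  -- abbreviations
  set c := ⁅X₂, d⁆ with hc
  set d₁ := ⁅Y₁, d⁆ with hd₁
  set ds := ⁅X₂, d₁⁆ with hds
  -- basic brackets
  have hX₁d₁ : ⁅X₁, d₁⁆ = d := by
    rw [hd₁, leibniz_lie, h₁, hH₁d, hX₁d, lie_zero, add_zero]
  have hH₁d₁ : ⁅H₁, d₁⁆ = -d₁ := by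
    rw [hd₁, leibniz_lie, h₃, hH₁d, neg_lie, two_smul, add_lie, ← hd₁]
    abel
  have hY₂d₁ : ⁅Y₂, d₁⁆ = 0 := by
    rw [hd₁, leibniz_lie, cY₂Y₁, hY₂d, zero_lie, lie_zero, add_zero]
  have hH₂d₁ : ⁅H₂, d₁⁆ = -d₁ := by
    rw [hd₁, leibniz_lie, cH₂Y₁, hH₂d, zero_lie, zero_add, lie_neg, ← hd₁]
  have hH₂c : ⁅H₂, c⁆ = c := by
    rw [hc, leibniz_lie, h₅, hH₂d, two_smul, add_lie, lie_neg, ← hc]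
    abel
  have hY₂c : ⁅Y₂, c⁆ = d := by
    rw [hc, leibniz_lie, hY₂X₂, hY₂d, lie_zero, add_zero, neg_lie, hH₂d, neg_neg]
  -- ds = ⁅Y₁, c⁆
  have hds' : ds = ⁅Y₁, c⁆ := by
    rw [hds, hd₁, leibniz_lie, cX₂Y₁, zero_lie, zero_add, ← hc]
  -- vanishing of doubly-lowered/raised vectors, by sl₂ representation theory
  have hμ3 : ∀ n : ℕ, (-3 : ℂ) ≠ n := by
    intro n hn
    have : (0:ℝ) ≤ (n:ℝ) := n.cast_nonneg
    have := congrArg Complex.re hn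
    simp at this; linarith
  have hμ2 : ∀ n : ℕ, (-2 : ℂ) ≠ n := by
    intro n hn
    have : (0:ℝ) ≤ (n:ℝ) := n.cast_nonneg
    have := congrArg Complex.re hn
    simp at this; linarith
  have hz₁ : ⁅Y₁, d₁⁆ = 0 := by
    refine sl2_aux H₁ X₁ Y₁ _ hH₁0 h₁ h₂ h₃ (-3) hμ3 ?_ ?_
    · rw [leibniz_lie, h₃, hH₁d₁, neg_lie, two_smul, add_lie, lie_neg]
      have h3 : (-3 : ℂ) • ⁅Y₁, d₁⁆ = -(⁅Y₁, d₁⁆ + ⁅Y₁, d₁⁆ + ⁅Y₁, d₁⁆) := by module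
      rw [h3]; abel
    · rw [leibniz_lie, h₁, hH₁d₁, hX₁d₁, ← hd₁]
      abel
  have hz₂ : ⁅X₂, c⁆ = 0 := by
    refine sl2_aux (-H₂) Y₂ X₂ _ (by simpa using hH₂0) ?_ ?_ ?_ (-3) hμ3 ?_ ?_
    · rw [← lie_skew, h₄]
    · rw [neg_lie, h₆, neg_neg]
    · rw [neg_lie, h₅]
    · rw [neg_lie, leibniz_lie, h₅, hH₂c, two_smul, add_lie]
      have h3 : (-3 : ℂ) • ⁅X₂, c⁆ = -(⁅X₂, c⁆ + ⁅X₂, c⁆ + ⁅X₂, c⁆) := by module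
      rw [h3]
    · rw [leibniz_lie, hY₂X₂, hY₂c, neg_lie, hH₂c, ← hc]
      abel
  -- squares vanish
  have hd₁sq : d₁ * d₁ = 0 := by
    refine sl2_aux H₁ X₁ Y₁ _ hH₁0 h₁ h₂ h₃ (-2) hμ2 ?_ ?_
    · rw [lie_mul', hH₁d₁]
      have h2 : (-2 : ℂ) • (d₁ * d₁) = -(d₁ * d₁) + -(d₁ * d₁) := by module
      rw [h2, neg_mul, mul_neg]
    · rw [lie_mul', hX₁d₁]
      exact anti_lem Y₁ d hd2
  have hcsq : c * c = 0 := by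
    refine sl2_aux (-H₂) Y₂ X₂ _ (by simpa using hH₂0) ?_ ?_ ?_ (-2) hμ2 ?_ ?_
    · rw [← lie_skew, h₄]
    · rw [neg_lie, h₆, neg_neg]
    · rw [neg_lie, h₅]
    · rw [neg_lie, lie_mul', hH₂c]
      have h2 : (-2 : ℂ) • (c * c) = -(c * c + c * c) := by module
      rw [h2]
    · rw [lie_mul', hY₂c]
      exact anti_lem X₂ d hd2
  -- brackets with ds
  have F1 : ⁅X₁, ds⁆ = c := by
    rw [hds, leibniz_lie, cX₁X₂, hX₁d₁, zero_lie, zero_add, ← hc]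
  have F2 : ⁅Y₁, ds⁆ = 0 := by
    rw [hds, leibniz_lie, cY₁X₂, hz₁, zero_lie, lie_zero, add_zero]
  have F3 : ⁅X₂, ds⁆ = 0 := by
    rw [hds', leibniz_lie, cX₂Y₁, hz₂, zero_lie, lie_zero, add_zero]
  have F4 : ⁅Y₂, ds⁆ = d₁ := by
    rw [hds, leibniz_lie, hY₂X₂, hY₂d₁, lie_zero, add_zero, neg_lie, hH₂d₁, neg_neg]
  -- final computations
  refine ⟨?_, ?_, ?_, ?_⟩
  · rw [lie_add, lie_mul', lie_mul', hX₁d, F1, zero_mul, mul_zero, zero_add, add_zero]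
    exact anti_lem X₂ d hd2
  · rw [lie_add, lie_mul', lie_mul', F2, mul_zero, add_zero, zero_mul, zero_add]
    exact anti_lem X₂ d₁ hd₁sq
  · rw [lie_add, lie_mul', lie_mul', F3, mul_zero, add_zero, zero_mul, zero_add, hds']
    exact anti_lem Y₁ c hcsq
  · rw [lie_add, lie_mul', lie_mul', hY₂d, F4, zero_mul, mul_zero, zero_add, add_zero]
    exact anti_lem Y₁ d hd2
end

section
/- Let V = ⊕_ℓ V_ℓ be a Hodge–Lefschetz structure of central weight n: an sl₂(ℂ)-representation (with H acting by ℓ on V_ℓ) together with filtrations making each V_ℓ a Hodge structure of weight n+ℓ, such that X and Y are morphisms of Hodge structures of type (1,1) and (−1,−1) respectively, with X^ℓ : V_{-ℓ} → V_ℓ(ℓ) and Y^ℓ : V_ℓ → V_{-ℓ}(−ℓ) isomorphisms of Hodge structures. Then the Weil element w = e^X e^{-Y} e^X maps V_k isomorphically onto V_{-k} as a morphism of Hodge structures V_k → V_{-k}(−k); moreover the Lefschetz decomposition of any a ∈ V_k^{p,q} has components a_j ∈ V_{k-2j}^{p-j,q-j}. -/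
/-- The exponential of an endomorphism of a finite-dimensional complex vector
space, as a finite sum; it agrees with the analytic exponential whenever the
endomorphism is nilpotent. -/
noncomputable def nilExp {V : Type*} [AddCommGroup V] [Module ℂ V]
    [FiniteDimensional ℂ V] (f : Module.End ℂ V) : Module.End ℂ V :=
  ∑ k ∈ Finset.range (Module.finrank ℂ V + 1), ((k.factorial : ℂ))⁻¹ • f ^ k

set_option linter.unusedSectionVars false
section weilAux

open scoped DirectSum

variable {V : Type*} [AddCommGroup V] [Module ℂ V] [FiniteDimensional ℂ V]

local notation "N" => Module.finrank ℂ V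

lemma weilAux_pow_zero_of_le (A : Module.End ℂ V) (hA : A ^ N = 0) {m : ℕ} (hm : N ≤ m) :
    A ^ m = 0 := by
  rw [(by omega : m = N + (m - N)), pow_add, hA, zero_mul]

lemma weilAux_nilExp_eq_one_add (A : Module.End ℂ V) :
    nilExp A = 1 + A * ∑ k ∈ Finset.range N, (((k+1).factorial : ℂ))⁻¹ • A ^ k := by
  rw [nilExp, Finset.sum_range_succ', Finset.mul_sum]
  simp [pow_succ', mul_smul_comm, add_comm]

lemma weilAux_nilExp_isUnit (A : Module.End ℂ V) (hA : A ^ N = 0) : IsUnit (nilExp A) := by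
  rw [weilAux_nilExp_eq_one_add]
  refine IsNilpotent.isUnit_one_add ⟨N, ?_⟩
  have hc : Commute A (∑ k ∈ Finset.range N, (((k+1).factorial : ℂ))⁻¹ • A ^ k) :=
    Commute.sum_right _ _ _ (fun k _ => ((Commute.refl A).pow_right k).smul_right _)
  rw [hc.mul_pow, hA, zero_mul]

lemma weilAux_commute_nilExp (A : Module.End ℂ V) : Commute A (nilExp A) := by
  unfold nilExp
  exact Commute.sum_right _ _ _ (fun k _ => ((Commute.refl A).pow_right k).smul_right _)

lemma weilAux_sum_shift (A : Module.End ℂ V) (hA : A ^ N = 0) :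
    ∑ k ∈ Finset.range N, ((k.factorial : ℂ))⁻¹ • A ^ k = nilExp A := by
  rw [nilExp, Finset.sum_range_succ, hA, smul_zero, add_zero]

lemma weilAux_mul_nilExp_eq (A : Module.End ℂ V) :
    A * nilExp A = ∑ k ∈ Finset.range (N+1), ((k.factorial : ℂ))⁻¹ • A ^ (k+1) := by
  rw [nilExp, Finset.mul_sum]
  exact Finset.sum_congr rfl fun k _ => by rw [mul_smul_comm, pow_succ']

lemma weilAux_coeff1 (k : ℕ) :
    (((k+1).factorial : ℂ))⁻¹ * (((k+1):ℕ) : ℂ) = ((k.factorial : ℂ))⁻¹ := by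
  have h1 : ((k:ℂ)+1) ≠ 0 := Nat.cast_add_one_ne_zero k
  rw [Nat.factorial_succ]
  push_cast
  calc ((↑k+1) * (k.factorial:ℂ))⁻¹ * (↑k+1)
      = (↑k+1)⁻¹ * (↑k+1) * ((k.factorial:ℂ))⁻¹ := by rw [mul_inv]; ring
    _ = ((k.factorial:ℂ))⁻¹ := by rw [inv_mul_cancel₀ h1, one_mul]

lemma weilAux_coeff2 (k : ℕ) : (((k+1).factorial : ℂ))⁻¹ * (((k*(k+1)):ℕ) : ℂ)
    = (k : ℂ) * ((k.factorial : ℂ))⁻¹ := by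
  have h1 : ((k:ℂ)+1) ≠ 0 := Nat.cast_add_one_ne_zero k
  rw [Nat.factorial_succ]
  push_cast
  calc ((↑k+1) * (k.factorial:ℂ))⁻¹ * (↑k * (↑k+1))
      = (↑k+1)⁻¹ * (↑k+1) * ((k:ℂ) * ((k.factorial:ℂ))⁻¹) := by rw [mul_inv]; ring
    _ = (k:ℂ) * ((k.factorial:ℂ))⁻¹ := by rw [inv_mul_cancel₀ h1, one_mul]

lemma weilAux_sum_k (A : Module.End ℂ V) (hA : A ^ N = 0) (m : ℕ) (hm : N ≤ m) :
    ∑ k ∈ Finset.range m, ((k : ℂ) * ((k.factorial : ℂ))⁻¹) • A ^ k = A * nilExp A := by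
  induction m with
  | zero =>
    have h10 : (1 : Module.End ℂ V) = 0 := by
      have := hA; rw [(by omega : N = 0), pow_zero] at this; exact this
    have : A * nilExp A = A * nilExp A * 1 := (mul_one _).symm
    rw [this, h10, mul_zero]
    simp
  | succ m ih =>
    rcases Nat.lt_or_ge N (m+1) with h | h
    · have hm' : N ≤ m := by omega
      rw [Finset.sum_range_succ, ih hm', weilAux_pow_zero_of_le A hA hm', smul_zero, add_zero]
    · have hNm : N = m + 1 := by omega
      have key : ∀ k : ℕ, ((k+1 : ℕ) : ℂ) * (((k+1).factorial : ℂ))⁻¹ = ((k.factorial : ℂ))⁻¹ := by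
        intro k
        rw [mul_comm]
        exact weilAux_coeff1 k
      rw [Finset.sum_range_succ']
      simp only [Nat.cast_zero, zero_mul, zero_smul, add_zero]
      calc ∑ k ∈ Finset.range m, ((↑(k + 1) : ℂ) * ((↑(k + 1).factorial : ℂ))⁻¹) • A ^ (k + 1)
          = ∑ k ∈ Finset.range m, ((k.factorial : ℂ))⁻¹ • A ^ (k+1) := by
            refine Finset.sum_congr rfl fun k _ => ?_
            congr 1
            exact_mod_cast key k
        _ = ∑ k ∈ Finset.range (N+1), ((k.factorial : ℂ))⁻¹ • A ^ (k+1) := by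
            rw [hNm, Finset.sum_range_succ, Finset.sum_range_succ]
            have h1 : A ^ (m+1) = 0 := by rw [← hNm]; exact hA
            have h2 : A ^ (m+1+1) = 0 := by rw [pow_succ, h1, zero_mul]
            rw [h1, h2, smul_zero, smul_zero, add_zero, add_zero]
        _ = A * nilExp A := (weilAux_mul_nilExp_eq A).symm

lemma weilAux_conj1 (A B : Module.End ℂ V) (hA : A ^ N = 0) (c : ℂ)
    (h : A * B = B * A + c • A) :
    nilExp A * B = B * nilExp A + c • (A * nilExp A) := by
  have pow : ∀ k : ℕ, A ^ k * B = B * A ^ k + ((k : ℂ) * c) • A ^ k := by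
    intro k
    induction k with
    | zero => simp
    | succ k ih =>
      calc A ^ (k+1) * B = A * (A ^ k * B) := by rw [pow_succ', mul_assoc]
        _ = A * (B * A ^ k) + ((k:ℂ)*c) • (A * A ^ k) := by
            rw [ih, mul_add, mul_smul_comm]
        _ = (A * B) * A ^ k + ((k:ℂ)*c) • A ^ (k+1) := by rw [mul_assoc, pow_succ']
        _ = B * A ^ (k+1) + c • (A * A ^ k) + ((k:ℂ)*c) • A ^ (k+1) := by
            rw [h, add_mul, smul_mul_assoc, mul_assoc, ← pow_succ']
        _ = B * A ^ (k+1) + (((k+1:ℕ) : ℂ) * c) • A ^ (k+1) := by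
            rw [← pow_succ', add_assoc, ← add_smul]
            congr 2
            push_cast
            ring
  calc nilExp A * B = ∑ k ∈ Finset.range (N+1), ((k.factorial : ℂ))⁻¹ • (A ^ k * B) := by
        rw [nilExp, Finset.sum_mul]; simp [smul_mul_assoc]
    _ = ∑ k ∈ Finset.range (N+1), (((k.factorial : ℂ))⁻¹ • (B * A ^ k)
          + (c * ((k:ℂ) * ((k.factorial : ℂ))⁻¹)) • A ^ k) := by
        refine Finset.sum_congr rfl fun k _ => ?_
        rw [pow, smul_add, smul_smul]
        congr 2
        ring
    _ = B * nilExp A + c • (A * nilExp A) := by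
        rw [Finset.sum_add_distrib]
        congr 1
        · rw [nilExp, Finset.mul_sum]; simp [mul_smul_comm]
        · rw [← weilAux_sum_k A hA (N+1) (by omega), Finset.smul_sum]
          refine Finset.sum_congr rfl fun k _ => ?_
          rw [smul_smul]

lemma weilAux_conj2 (A B C : Module.End ℂ V) (hA : A ^ N = 0)
    (h1 : A * B = B * A + C) (h2 : A * C = C * A + (2:ℂ) • A) :
    nilExp A * B = B * nilExp A + C * nilExp A + A * nilExp A := by
  have pow : ∀ k : ℕ, A ^ (k+1) * B = B * A ^ (k+1) + (((k+1:ℕ)) : ℂ) • (C * A ^ k)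
      + (((k*(k+1):ℕ)) : ℂ) • A ^ k := by
    intro k
    induction k with
    | zero => simpa using h1
    | succ k ih =>
      calc A ^ (k+1+1) * B = A * (A ^ (k+1) * B) := by rw [pow_succ', mul_assoc]
        _ = A * (B * A ^ (k+1)) + ((k+1:ℕ) : ℂ) • (A * (C * A ^ k))
            + ((k*(k+1):ℕ) : ℂ) • (A * A ^ k) := by
            rw [ih]; simp only [mul_add, mul_smul_comm]
        _ = B * A ^ (k+1+1) + C * A ^ (k+1)
            + ((k+1:ℕ) : ℂ) • (C * A ^ (k+1) + (2:ℂ) • A ^ (k+1))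
            + ((k*(k+1):ℕ) : ℂ) • A ^ (k+1) := by
            rw [← mul_assoc A B, h1, ← mul_assoc A C, h2]
            simp only [add_mul, smul_mul_assoc, mul_assoc, ← pow_succ']
        _ = B * A ^ (k+1+1) + ((k+1+1:ℕ) : ℂ) • (C * A ^ (k+1))
            + (((k+1)*(k+1+1):ℕ) : ℂ) • A ^ (k+1) := by
            push_cast
            module
  calc nilExp A * B
      = ∑ k ∈ Finset.range (N+1), ((k.factorial : ℂ))⁻¹ • (A ^ k * B) := by
        rw [nilExp, Finset.sum_mul]; simp [smul_mul_assoc]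
    _ = ∑ k ∈ Finset.range N, (((k+1).factorial : ℂ))⁻¹ • (A ^ (k+1) * B) + B := by
        rw [Finset.sum_range_succ']; simp
    _ = ∑ k ∈ Finset.range N, ((((k+1).factorial : ℂ))⁻¹ • (B * A ^ (k+1))
          + (((k.factorial : ℂ))⁻¹ • (C * A ^ k)
          + ((k:ℂ) * ((k.factorial : ℂ))⁻¹) • A ^ k)) + B := by
        congr 1
        refine Finset.sum_congr rfl fun k _ => ?_
        rw [pow, smul_add, smul_add, smul_smul, smul_smul, weilAux_coeff1, weilAux_coeff2,
          add_assoc]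
    _ = (∑ k ∈ Finset.range N, (((k+1).factorial : ℂ))⁻¹ • (B * A ^ (k+1)) + B)
          + (∑ k ∈ Finset.range N, ((k.factorial : ℂ))⁻¹ • (C * A ^ k)
          + ∑ k ∈ Finset.range N, ((k:ℂ) * ((k.factorial : ℂ))⁻¹) • A ^ k) := by
        rw [Finset.sum_add_distrib, Finset.sum_add_distrib]
        abel
    _ = B * nilExp A + C * nilExp A + A * nilExp A := by
        have hB : B * nilExp A
            = ∑ k ∈ Finset.range N, (((k+1).factorial : ℂ))⁻¹ • (B * A ^ (k+1)) + B := by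
          rw [nilExp, Finset.mul_sum]
          simp only [mul_smul_comm]
          rw [Finset.sum_range_succ']
          simp
        have hC : C * nilExp A
            = ∑ k ∈ Finset.range N, ((k.factorial : ℂ))⁻¹ • (C * A ^ k) := by
          rw [← weilAux_sum_shift A hA, Finset.mul_sum]
          exact Finset.sum_congr rfl fun k _ => mul_smul_comm _ _ _
        rw [hB, hC, ← weilAux_sum_k A hA N le_rfl]
        abel

lemma weilAux_weil_H (X Y H : Module.End ℂ V) (hXN : X ^ N = 0) (hYN : (-Y) ^ N = 0)
    (r1 : X * H = H * X + (-2:ℂ) • X)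
    (r2 : (-Y) * H = H * (-Y) + (2:ℂ) • (-Y))
    (r3 : (-Y) * X = X * (-Y) + H) :
    (nilExp X * nilExp (-Y) * nilExp X) * H
      = -(H * (nilExp X * nilExp (-Y) * nilExp X)) := by
  set E := nilExp X with hE
  set S := nilExp (-Y) with hS
  have e1 : E * H = H * E + (-2:ℂ) • (X * E) := weilAux_conj1 X H hXN (-2) r1
  have e2 : S * H = H * S + (2:ℂ) • ((-Y) * S) := weilAux_conj1 (-Y) H hYN 2 r2
  have e3 : S * X = X * S + H * S + (-Y) * S := weilAux_conj2 (-Y) X H hYN r3 r2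
  have e4 : E * X = X * E := ((weilAux_commute_nilExp X)).symm.eq
  have f1 : S * (E * H) = -(H * (S * E)) + (-2:ℂ) • (X * (S * E)) := by
    rw [e1, mul_add, mul_smul_comm, ← mul_assoc S H E, e2, ← mul_assoc S X, e3]
    simp only [add_mul, smul_mul_assoc, mul_assoc]
    module
  calc E * S * E * H = E * (S * (E * H)) := by simp only [mul_assoc]
    _ = -(E * (H * (S * E))) + (-2:ℂ) • (E * (X * (S * E))) := by
        rw [f1, mul_add, mul_neg, mul_smul_comm]
    _ = -((H * E + (-2:ℂ) • (X * E)) * (S * E)) + (-2:ℂ) • ((X * E) * (S * E)) := by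
        rw [← mul_assoc E H, e1, ← mul_assoc E X, e4]
    _ = -(H * (E * S * E)) := by
        simp only [add_mul, smul_mul_assoc, mul_assoc]
        module

end weilAux

set_option linter.unusedSectionVars false
section dsAux

open scoped DirectSum

variable {V : Type*} [AddCommGroup V] [Module ℂ V]
variable {ι : Type*} [DecidableEq ι] (Q : ι → Submodule ℂ V) (hQ : DirectSum.IsInternal Q)

include hQ in
lemma weilAux_mem_of_components (d : ⨁ i, Q i) (i₀ : ι) (h : ∀ i, i ≠ i₀ → d i = 0) :
    DirectSum.coeLinearMap Q d ∈ Q i₀ := by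
  have hd : d = DirectSum.of (fun i => Q i) i₀ (d i₀) := by
    apply DFinsupp.ext
    intro j
    rcases eq_or_ne j i₀ with rfl | hj
    · rw [DirectSum.of_eq_same]
    · rw [DirectSum.of_eq_of_ne _ _ _ hj, h j hj]
  rw [hd, DirectSum.coeLinearMap_of]
  exact (d i₀).2

include hQ in
lemma weilAux_supported (D : Set ι) (z : V) (hz : z ∈ ⨆ i ∈ D, Q i)
    (d : ⨁ i, Q i) (hd : DirectSum.coeLinearMap Q d = z) : ∀ i ∉ D, d i = 0 := by
  have hinj : Function.Injective ⇑(DirectSum.coeLinearMap Q) := hQ.injective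
  revert d
  refine Submodule.iSup_induction
    (motive := fun z => ∀ d : ⨁ i, Q i, DirectSum.coeLinearMap Q d = z → ∀ i ∉ D, d i = 0)
    _ hz ?_ ?_ ?_
  · intro i x hx d hd j hj
    by_cases hiD : i ∈ D
    · rw [iSup_pos hiD] at hx
      have : d = DirectSum.of (fun i => Q i) i ⟨x, hx⟩ := by
        apply hinj
        rw [hd, DirectSum.coeLinearMap_of]
      rw [this, DirectSum.of_eq_of_ne _ _ _ (show j ≠ i from fun hij => hj (hij ▸ hiD))]
    · rw [iSup_neg hiD] at hx
      have hx0 : x = 0 := by simpa using hx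
      have : d = 0 := by apply hinj; rw [hd, hx0, map_zero]
      rw [this]; rfl
  · intro d hd i hi
    have : d = 0 := by apply hinj; rw [hd, map_zero]
    rw [this]; rfl
  · intro x y hx hy d hd i hi
    obtain ⟨dx, hdx⟩ := hQ.surjective x
    obtain ⟨dy, hdy⟩ := hQ.surjective y
    have hdx' : DirectSum.coeLinearMap Q dx = x := hdx
    have hdy' : DirectSum.coeLinearMap Q dy = y := hdy
    have : d = dx + dy := by
      apply hinj
      rw [hd, map_add, hdx', hdy']
    rw [this, DFinsupp.add_apply, hx dx hdx' i hi, hy dy hdy' i hi, add_zero]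

lemma weilAux_coeL_mem_biSup (D : Set ι) (d : ⨁ i, Q i) (h : ∀ i, i ∉ D → d i = 0) :
    DirectSum.coeLinearMap Q d ∈ ⨆ i ∈ D, Q i := by
  induction d using DFinsupp.induction with
  | h0 => rw [map_zero]; exact zero_mem _
  | ha i b f hfi hb ih =>
    have hiD : i ∈ D := by
      by_contra hiD
      have := h i hiD
      rw [DFinsupp.add_apply, DFinsupp.single_eq_same, hfi, add_zero] at this
      exact hb this
    rw [map_add]
    refine add_mem ?_ (ih fun j hj => ?_)
    · have : (DFinsupp.single i b : ⨁ i, Q i) = DirectSum.of (fun i => Q i) i b := rfl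
      rw [this, DirectSum.coeLinearMap_of]
      exact le_iSup₂ (f := fun i (_ : i ∈ D) => Q i) i hiD b.2
    · have hji : j ≠ i := fun hji => hj (hji ▸ hiD)
      have := h j hj
      rwa [DFinsupp.add_apply, DFinsupp.single_eq_of_ne hji, zero_add] at this

include hQ in
lemma weilAux_eigen_supported (wt : ι → ℂ) (Hop : Module.End ℂ V)
    (hH : ∀ i, ∀ x ∈ Q i, Hop x = wt i • x) (z : V) (μ : ℂ) (hz : Hop z = μ • z)
    (d : ⨁ i, Q i) (hd : DirectSum.coeLinearMap Q d = z) : ∀ i, wt i ≠ μ → d i = 0 := by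
  have hinj : Function.Injective ⇑(DirectSum.coeLinearMap Q) := hQ.injective
  set F : ∀ i, Q i →ₗ[ℂ] Q i := fun i => wt i • LinearMap.id with hF
  set Φ : (⨁ i, Q i) →ₗ[ℂ] (⨁ i, Q i) :=
    DirectSum.toModule ℂ ι _ (fun j => (DirectSum.lof ℂ ι (fun i => Q i) j) ∘ₗ F j) with hΦ
  have key : (DirectSum.coeLinearMap Q) ∘ₗ Φ = Hop ∘ₗ DirectSum.coeLinearMap Q := by
    refine DirectSum.linearMap_ext _ fun i => ?_
    ext x
    simp only [LinearMap.comp_apply, hΦ, DirectSum.toModule_lof]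
    rw [DirectSum.lof_eq_of, DirectSum.coeLinearMap_of, DirectSum.lof_eq_of,
      DirectSum.coeLinearMap_of]
    rw [show ((F i x : Q i) : V) = wt i • (x : V) from rfl]
    exact (hH i x x.2).symm
  have hcomp : ∀ i, (Φ d) i = F i (d i) := by
    intro i
    have hc : (DirectSum.component ℂ ι _ i) ∘ₗ Φ
        = F i ∘ₗ (DirectSum.component ℂ ι (fun i => Q i) i) := by
      refine DirectSum.linearMap_ext _ fun j => ?_
      ext x
      simp only [LinearMap.comp_apply, hΦ, DirectSum.toModule_lof, DirectSum.component.of]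
      rcases eq_or_ne j i with rfl | hji
      · simp
      · simp [hji]
    exact LinearMap.congr_fun hc d
  have h3 : Φ d = μ • d := by
    apply hinj
    rw [map_smul, hd, ← hz, ← hd]
    exact LinearMap.congr_fun key d
  intro i hwt
  have h5 : (wt i) • (d i : V) = μ • (d i : V) := by
    have h4 : (Φ d) i = (μ • d) i := by rw [h3]
    rw [hcomp i] at h4
    have := congrArg (Subtype.val) h4
    simpa [hF, DirectSum.smul_apply] using this
  have h6 : ((wt i) - μ) • (d i : V) = 0 := by rw [sub_smul, h5, sub_self]
  rcases smul_eq_zero.mp h6 with h | h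
  · exact absurd (sub_eq_zero.mp h) hwt
  · exact Subtype.ext h

omit [DecidableEq ι] in
lemma weilAux_biSup_stable (D : Set ι) (A : Module.End ℂ V)
    (h : ∀ i ∈ D, ∀ x ∈ Q i, A x ∈ ⨆ i ∈ D, Q i) :
    ∀ z ∈ ⨆ i ∈ D, Q i, A z ∈ ⨆ i ∈ D, Q i := by
  intro z hz
  refine Submodule.iSup_induction (motive := fun z => A z ∈ ⨆ i ∈ D, Q i) _ hz ?_ ?_ ?_
  · intro i x hx
    by_cases hiD : i ∈ D
    · rw [iSup_pos hiD] at hx; exact h i hiD x hx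
    · rw [iSup_neg hiD] at hx
      have : x = 0 := by simpa using hx
      rw [this, map_zero]; exact zero_mem _
  · show A 0 ∈ ⨆ i ∈ D, Q i
    rw [map_zero]; exact zero_mem _
  · intro x y hx hy
    show A (x + y) ∈ ⨆ i ∈ D, Q i
    rw [map_add]; exact add_mem hx hy

end dsAux

set_option linter.unusedSectionVars false
lemma weilAux_nilExp_stable {V : Type*} [AddCommGroup V] [Module ℂ V] [FiniteDimensional ℂ V]
    (T : Submodule ℂ V) (A : Module.End ℂ V)
    (h : ∀ z ∈ T, A z ∈ T) : ∀ z ∈ T, nilExp A z ∈ T := by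
  intro z hz
  have hpow : ∀ k : ℕ, (A ^ k) z ∈ T := by
    intro k
    induction k with
    | zero => simpa using hz
    | succ k ih =>
      have : (A ^ (k+1)) z = A ((A ^ k) z) := by rw [pow_succ']; rfl
      rw [this]; exact h _ ih
  rw [nilExp]
  rw [LinearMap.sum_apply]
  refine Submodule.sum_mem _ fun k _ => ?_
  rw [LinearMap.smul_apply]
  exact Submodule.smul_mem _ _ (hpow k)


/-- Let `V = ⊕_ℓ V_ℓ` be a Hodge–Lefschetz structure of central weight `n`, with
Hodge pieces `P ℓ p q ⊆ V_ℓ` (supported on `p + q = n + ℓ`), `sl₂`-action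
`(X, Y, H)` with `X`, `Y` of Hodge types `(1,1)` and `(−1,−1)` and
`X^ℓ : V_{-ℓ} → V_ℓ(ℓ)`, `Y^ℓ : V_ℓ → V_{-ℓ}(−ℓ)` isomorphisms of Hodge
structures.  Then the Weil element `w = e^X e^{-Y} e^X` maps `V_k` isomorphically
onto `V_{-k}` as a morphism of Hodge structures `V_k → V_{-k}(−k)`; moreover the
Lefschetz decomposition of any `a ∈ V_k^{p,q}` has components
`a_j ∈ V_{k-2j}^{p-j,q-j}`. -/
theorem weil_element_hodge_lefschetz
    (V : Type*) [AddCommGroup V] [Module ℂ V] [FiniteDimensional ℂ V]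
    (n : ℤ) (P : ℤ → ℤ → ℤ → Submodule ℂ V)
    (hsupp : ∀ ℓ p q : ℤ, p + q ≠ n + ℓ → P ℓ p q = ⊥)
    (hint : DirectSum.IsInternal (fun x : ℤ × ℤ × ℤ => P x.1 x.2.1 x.2.2))
    (X Y H : Module.End ℂ V)
    (hXY : ⁅X, Y⁆ = H) (hHX : ⁅H, X⁆ = 2 • X) (hHY : ⁅H, Y⁆ = -(2 • Y))
    (hH : ∀ ℓ p q : ℤ, ∀ x ∈ P ℓ p q, H x = (ℓ : ℂ) • x)
    (hX : ∀ ℓ p q : ℤ, ∀ x ∈ P ℓ p q, X x ∈ P (ℓ + 2) (p + 1) (q + 1))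
    (hY : ∀ ℓ p q : ℤ, ∀ x ∈ P ℓ p q, Y x ∈ P (ℓ - 2) (p - 1) (q - 1))
    (hXiso : ∀ (ℓ : ℕ) (p q : ℤ), ∀ y ∈ P (ℓ : ℤ) p q,
      ∃! x : V, x ∈ P (-(ℓ : ℤ)) (p - ℓ) (q - ℓ) ∧ (X ^ ℓ) x = y)
    (hYiso : ∀ (ℓ : ℕ) (p q : ℤ), ∀ y ∈ P (-(ℓ : ℤ)) p q,
      ∃! x : V, x ∈ P (ℓ : ℤ) (p + ℓ) (q + ℓ) ∧ (Y ^ ℓ) x = y) :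
    (∀ k p q : ℤ, ∀ a ∈ P k p q,
      (nilExp X * nilExp (-Y) * nilExp X) a ∈ P (-k) (p - k) (q - k)) ∧
    Function.Bijective ⇑(nilExp X * nilExp (-Y) * nilExp X) ∧
    (∀ k p q : ℤ, ∀ b ∈ P (-k) (p - k) (q - k),
      ∃ a ∈ P k p q, (nilExp X * nilExp (-Y) * nilExp X) a = b) ∧
    (∀ k p q : ℤ, ∀ a ∈ P k p q, ∃ (m : ℕ) (c : ℕ → V),
      (∀ j : ℕ, c j ∈ P (k - 2 * (j : ℤ)) (p - j) (q - j)) ∧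
      (∀ j : ℕ, Y (c j) = 0) ∧
      (∀ j : ℕ, (j : ℤ) < max k 0 → c j = 0) ∧
      a = ∑ j ∈ Finset.range m, ((j.factorial : ℂ))⁻¹ • (X ^ j) (c j)) := by
  classical
  set Q : ℤ × ℤ × ℤ → Submodule ℂ V := fun x => P x.1 x.2.1 x.2.2 with hQdef
  have hQ : DirectSum.IsInternal Q := hint
  have hind : iSupIndep Q := hQ.submodule_iSupIndep
  have htop : (⨆ i, Q i) = ⊤ := hQ.submodule_iSup_eq_top
  -- membership of powers
  have memX : ∀ (j : ℕ) (k p q : ℤ), ∀ v ∈ P k p q,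
      (X ^ j) v ∈ P (k + 2*(j:ℤ)) (p + (j:ℤ)) (q + (j:ℤ)) := by
    intro j
    induction j with
    | zero => intro k p q v hv; simpa using hv
    | succ j ih =>
      intro k p q v hv
      have h1 := hX (k + 2*(j:ℤ)) (p + (j:ℤ)) (q + (j:ℤ)) _ (ih k p q v hv)
      have h2 : (X ^ (j+1)) v = X ((X ^ j) v) := by rw [pow_succ']; rfl
      rw [h2]
      convert h1 using 2 <;> push_cast <;> ring
  have memY : ∀ (j : ℕ) (k p q : ℤ), ∀ v ∈ P k p q,
      (Y ^ j) v ∈ P (k - 2*(j:ℤ)) (p - (j:ℤ)) (q - (j:ℤ)) := by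
    intro j
    induction j with
    | zero => intro k p q v hv; simpa using hv
    | succ j ih =>
      intro k p q v hv
      have h1 := hY (k - 2*(j:ℤ)) (p - (j:ℤ)) (q - (j:ℤ)) _ (ih k p q v hv)
      have h2 : (Y ^ (j+1)) v = Y ((Y ^ j) v) := by rw [pow_succ']; rfl
      rw [h2]
      convert h1 using 2 <;> push_cast <;> ring
  -- nilpotency
  have nilpgen : ∀ (A : Module.End ℂ V) (σ : ℤ×ℤ×ℤ → ℤ×ℤ×ℤ),
      (∀ i : ℤ×ℤ×ℤ, ∀ v ∈ Q i, A v ∈ Q (σ i)) →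
      (∀ (i : ℤ×ℤ×ℤ) (s t : ℕ), s ≠ t → σ^[s] i ≠ σ^[t] i) →
      A ^ (Module.finrank ℂ V) = 0 := by
    intro A σ hA hσ
    have hp : ∀ (i : ℤ×ℤ×ℤ) (v : V), v ∈ Q i → (A ^ (Module.finrank ℂ V)) v = 0 := by
      intro i v hv
      by_contra hne
      have hmem : ∀ s : ℕ, (A ^ s) v ∈ Q (σ^[s] i) := by
        intro s
        induction s with
        | zero => simpa using hv
        | succ s ih =>
          have h2 : (A ^ (s+1)) v = A ((A ^ s) v) := by rw [pow_succ']; rfl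
          rw [h2, Function.iterate_succ_apply']
          exact hA _ _ ih
      have hvj : ∀ j : Fin (Module.finrank ℂ V + 1), (A ^ (j:ℕ)) v ≠ 0 := by
        intro j h0
        apply hne
        have hle : (j:ℕ) ≤ Module.finrank ℂ V := by omega
        rw [(by omega : Module.finrank ℂ V = (Module.finrank ℂ V - (j:ℕ)) + (j:ℕ)), pow_add,
          Module.End.mul_apply, h0, map_zero]
      have hfinj : Function.Injective (fun j : Fin (Module.finrank ℂ V + 1) => σ^[(j:ℕ)] i) := by
        intro a b hab
        by_contra hne'
        exact hσ i a b (fun h => hne' (Fin.ext h)) hab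
      have hindf : iSupIndep (Q ∘ (fun j : Fin (Module.finrank ℂ V + 1) => σ^[(j:ℕ)] i)) :=
        hind.comp hfinj
      have hli : LinearIndependent ℂ (fun j : Fin (Module.finrank ℂ V + 1) => (A ^ (j:ℕ)) v) :=
        hindf.linearIndependent _ (fun j => hmem (j:ℕ)) hvj
      have hcard := hli.fintype_card_le_finrank
      simp only [Fintype.card_fin] at hcard
      omega
    ext v
    simp only [LinearMap.zero_apply]
    have hv : v ∈ ⨆ i, Q i := htop ▸ Submodule.mem_top
    refine Submodule.iSup_induction (motive := fun z => (A ^ (Module.finrank ℂ V)) z = 0) _ hv ?_ ?_ ?_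
    · intro i x hx; exact hp i x hx
    · show (A ^ (Module.finrank ℂ V)) 0 = 0
      rw [map_zero]
    · intro x y hx hy
      show (A ^ (Module.finrank ℂ V)) (x + y) = 0
      rw [map_add, hx, hy, add_zero]
  have nilpX : X ^ (Module.finrank ℂ V) = 0 := by
    refine nilpgen X (fun i => (i.1 + 2, i.2.1 + 1, i.2.2 + 1)) ?_ ?_
    · intro i v hv; exact hX i.1 i.2.1 i.2.2 v hv
    · intro i s t hst
      have hs : ∀ (u : ℕ) (j : ℤ×ℤ×ℤ),
          (fun i : ℤ×ℤ×ℤ => (i.1 + 2, i.2.1 + 1, i.2.2 + 1))^[u] j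
            = (j.1 + 2*u, j.2.1 + u, j.2.2 + u) := by
        intro u
        induction u with
        | zero => intro j; simp
        | succ u ih =>
          intro j
          rw [Function.iterate_succ_apply', ih j]
          simp only [Prod.mk.injEq]
          refine ⟨by push_cast; ring, by push_cast; ring, by push_cast; ring⟩
      rw [hs s i, hs t i]
      intro hc
      rw [Prod.mk.injEq, Prod.mk.injEq] at hc
      obtain ⟨h1, h2, h3⟩ := hc
      omega
  have nilpY : Y ^ (Module.finrank ℂ V) = 0 := by
    refine nilpgen Y (fun i => (i.1 - 2, i.2.1 - 1, i.2.2 - 1)) ?_ ?_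
    · intro i v hv; exact hY i.1 i.2.1 i.2.2 v hv
    · intro i s t hst
      have hs : ∀ (u : ℕ) (j : ℤ×ℤ×ℤ),
          (fun i : ℤ×ℤ×ℤ => (i.1 - 2, i.2.1 - 1, i.2.2 - 1))^[u] j
            = (j.1 - 2*u, j.2.1 - u, j.2.2 - u) := by
        intro u
        induction u with
        | zero => intro j; simp
        | succ u ih =>
          intro j
          rw [Function.iterate_succ_apply', ih j]
          simp only [Prod.mk.injEq]
          refine ⟨by push_cast; ring, by push_cast; ring, by push_cast; ring⟩
      rw [hs s i, hs t i]
      intro hc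
      rw [Prod.mk.injEq, Prod.mk.injEq] at hc
      obtain ⟨h1, h2, h3⟩ := hc
      omega
  have nilpnegY : (-Y) ^ (Module.finrank ℂ V) = 0 := by
    rw [neg_pow, nilpY, mul_zero]
  -- ring relations
  rw [Ring.lie_def] at hXY hHX hHY
  have smul2 : ∀ A : Module.End ℂ V, (2:ℂ) • A = A + A := fun A => by
    rw [show (2:ℂ) = 1+1 by norm_num, add_smul, one_smul]
  have rXH : X * H = H * X + (-2:ℂ) • X := by
    rw [neg_smul, smul2]
    calc X * H = H * X - (H * X - X * H) := by abel
      _ = H * X + -(X + X) := by rw [hHX, two_smul]; abel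
  have rYH : (-Y) * H = H * (-Y) + (2:ℂ) • (-Y) := by
    rw [smul2]
    have hYH : Y * H = H * Y + (Y + Y) := by
      calc Y * H = H * Y - (H * Y - Y * H) := by abel
        _ = H * Y + (Y + Y) := by rw [hHY, two_smul]; abel
    calc (-Y) * H = -(Y * H) := by rw [neg_mul]
      _ = -(H * Y + (Y + Y)) := by rw [hYH]
      _ = H * (-Y) + (-Y + -Y) := by rw [mul_neg]; abel
  have rYX : (-Y) * X = X * (-Y) + H := by
    rw [neg_mul, mul_neg, ← hXY]
    abel
  have wHrel := weilAux_weil_H X Y H nilpX nilpnegY rXH rYH rYX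
  set w : Module.End ℂ V := nilExp X * nilExp (-Y) * nilExp X with hw
  -- part 1
  have part1 : ∀ k p q : ℤ, ∀ a ∈ P k p q, w a ∈ P (-k) (p - k) (q - k) := by
    intro k p q a ha
    set D : Set (ℤ×ℤ×ℤ) := {i | 2*i.2.1 - i.1 = 2*p - k ∧ 2*i.2.2 - i.1 = 2*q - k} with hD
    have hXT : ∀ z ∈ ⨆ i ∈ D, Q i, X z ∈ ⨆ i ∈ D, Q i := by
      refine weilAux_biSup_stable Q D X (fun i hiD x hx => ?_)
      have hj : ((i.1+2, i.2.1+1, i.2.2+1) : ℤ×ℤ×ℤ) ∈ D := by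
        obtain ⟨h1, h2⟩ := hiD
        constructor
        · show 2*(i.2.1+1) - (i.1+2) = 2*p - k
          omega
        · show 2*(i.2.2+1) - (i.1+2) = 2*q - k
          omega
      have hm : X x ∈ Q (i.1+2, i.2.1+1, i.2.2+1) := hX i.1 i.2.1 i.2.2 x hx
      exact le_iSup₂ (f := fun j (_ : j ∈ D) => Q j) _ hj hm
    have hYT : ∀ z ∈ ⨆ i ∈ D, Q i, (-Y) z ∈ ⨆ i ∈ D, Q i := by
      refine weilAux_biSup_stable Q D (-Y) (fun i hiD x hx => ?_)
      have hj : ((i.1-2, i.2.1-1, i.2.2-1) : ℤ×ℤ×ℤ) ∈ D := by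
        obtain ⟨h1, h2⟩ := hiD
        constructor
        · show 2*(i.2.1-1) - (i.1-2) = 2*p - k
          omega
        · show 2*(i.2.2-1) - (i.1-2) = 2*q - k
          omega
      have hm : Y x ∈ Q (i.1-2, i.2.1-1, i.2.2-1) := hY i.1 i.2.1 i.2.2 x hx
      have : (-Y) x = -(Y x) := rfl
      rw [this]
      exact neg_mem (le_iSup₂ (f := fun j (_ : j ∈ D) => Q j) _ hj hm)
    have haT : a ∈ ⨆ i ∈ D, Q i := by
      have hkD : ((k, p, q) : ℤ×ℤ×ℤ) ∈ D := by
        constructor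
        · show 2*p - k = 2*p - k
          rfl
        · show 2*q - k = 2*q - k
          rfl
      exact le_iSup₂ (f := fun j (_ : j ∈ D) => Q j) _ hkD ha
    have hwT : w a ∈ ⨆ i ∈ D, Q i := by
      have h1 := weilAux_nilExp_stable _ X hXT a haT
      have h2 := weilAux_nilExp_stable _ (-Y) hYT _ h1
      have h3 := weilAux_nilExp_stable _ X hXT _ h2
      have : w a = nilExp X (nilExp (-Y) (nilExp X a)) := by
        rw [hw]; rfl
      rw [this]
      exact h3
    have heig : H (w a) = ((-k : ℤ) : ℂ) • (w a) := by
      have h1 : H * w = -(w * H) := by rw [wHrel, neg_neg]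
      have h2 : H (w a) = (H * w) a := rfl
      rw [h2, h1]
      have h3 : (-(w * H)) a = -(w (H a)) := rfl
      rw [h3, hH k p q a ha, map_smul]
      push_cast
      rw [neg_smul]
    obtain ⟨d, hd⟩ := hQ.surjective (w a)
    have hd' : DirectSum.coeLinearMap Q d = w a := hd
    have hoff1 : ∀ i ∉ D, d i = 0 := weilAux_supported Q hQ D (w a) hwT d hd'
    have hoff2 : ∀ i : ℤ×ℤ×ℤ, ((i.1 : ℂ)) ≠ ((-k : ℤ) : ℂ) → d i = 0 :=
      weilAux_eigen_supported Q hQ (fun i => (i.1 : ℂ)) H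
        (fun i x hx => hH i.1 i.2.1 i.2.2 x hx) (w a) ((-k : ℤ) : ℂ) heig d hd'
    have hall : ∀ i : ℤ×ℤ×ℤ, i ≠ ((-k, p - k, q - k) : ℤ×ℤ×ℤ) → d i = 0 := by
      intro i hi
      by_cases h1 : i ∈ D
      · by_cases h2 : i.1 = -k
        · exfalso
          apply hi
          obtain ⟨hA, hB⟩ := h1
          obtain ⟨i1, i2, i3⟩ := i
          simp only at hA hB h2
          simp only [Prod.mk.injEq]
          refine ⟨h2, by omega, by omega⟩
        · exact hoff2 i (fun hc => h2 (by exact_mod_cast hc))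
      · exact hoff1 i h1
    have hmem := weilAux_mem_of_components Q hQ d (-k, p - k, q - k) hall
    rw [hd'] at hmem
    exact hmem
  -- part 2
  have hunit : IsUnit w := by
    have u1 : IsUnit (nilExp X) := weilAux_nilExp_isUnit X nilpX
    have u2 : IsUnit (nilExp (-Y)) := weilAux_nilExp_isUnit (-Y) nilpnegY
    exact (u1.mul u2).mul u1
  have part2 : Function.Bijective ⇑w := (Module.End.isUnit_iff w).mp hunit
  -- part 3
  have part3 : ∀ k p q : ℤ, ∀ b ∈ P (-k) (p - k) (q - k), ∃ a ∈ P k p q, w a = b := by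
    intro k p q b hb
    obtain ⟨a', ha'⟩ := part2.surjective b
    obtain ⟨d, hd⟩ := hQ.surjective a'
    have hd' : DirectSum.coeLinearMap Q d = a' := hd
    set i₀ : ℤ×ℤ×ℤ := (k, p, q) with hi₀
    set t : ℤ×ℤ×ℤ := (-k, p - k, q - k) with ht
    refine ⟨(d i₀ : V), (d i₀).2, ?_⟩
    have hrest : a' - (d i₀ : V) ∈ ⨆ i ∈ {j : ℤ×ℤ×ℤ | j ≠ i₀}, Q i := by
      have heq : a' - (d i₀ : V)
          = DirectSum.coeLinearMap Q (d - DirectSum.of (fun i => Q i) i₀ (d i₀)) := by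
        rw [map_sub, hd', DirectSum.coeLinearMap_of]
      rw [heq]
      refine weilAux_coeL_mem_biSup Q _ _ (fun i hi => ?_)
      have hii : i = i₀ := not_not.mp (fun h => hi h)
      subst hii
      rw [DFinsupp.sub_apply, DirectSum.of_eq_same, sub_self]
    have hwrest : w (a' - (d i₀ : V)) ∈ ⨆ i ∈ {j : ℤ×ℤ×ℤ | j ≠ t}, Q i := by
      refine Submodule.iSup_induction
        (motive := fun z => w z ∈ ⨆ i ∈ {j : ℤ×ℤ×ℤ | j ≠ t}, Q i) _ hrest ?_ ?_ ?_
      · intro i x hx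
        by_cases hiD : i ∈ {j : ℤ×ℤ×ℤ | j ≠ i₀}
        · rw [iSup_pos hiD] at hx
          have hw1 : w x ∈ Q (-i.1, i.2.1 - i.1, i.2.2 - i.1) := part1 i.1 i.2.1 i.2.2 x hx
          refine le_iSup₂ (f := fun j (_ : j ∈ {j : ℤ×ℤ×ℤ | j ≠ t}) => Q j) _ ?_ hw1
          show ((-i.1, i.2.1 - i.1, i.2.2 - i.1) : ℤ×ℤ×ℤ) ≠ t
          intro hc
          apply hiD
          rw [ht, Prod.mk.injEq, Prod.mk.injEq] at hc
          obtain ⟨h1, h2, h3⟩ := hc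
          obtain ⟨i1, i2, i3⟩ := i
          simp only at h1 h2 h3
          show ((i1, i2, i3) : ℤ×ℤ×ℤ) = i₀
          rw [hi₀, Prod.mk.injEq, Prod.mk.injEq]
          refine ⟨by omega, by omega, by omega⟩
        · rw [iSup_neg hiD] at hx
          have : x = 0 := by simpa using hx
          rw [this]
          show w 0 ∈ _
          rw [map_zero]
          exact zero_mem _
      · show w 0 ∈ _
        rw [map_zero]
        exact zero_mem _
      · intro x y hx hy
        show w (x + y) ∈ _
        rw [map_add]
        exact add_mem hx hy
    have h2 : b - w (d i₀ : V) ∈ Q t := by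
      have hwd : w (d i₀ : V) ∈ Q t := part1 k p q (d i₀ : V) (d i₀).2
      exact sub_mem hb hwd
    have h1 : b - w (d i₀ : V) = w (a' - (d i₀ : V)) := by rw [map_sub, ha']
    have hdisj : Disjoint (Q t) (⨆ i, ⨆ (_ : i ≠ t), Q i) := hind t
    have hz : b - w (d i₀ : V) = 0 := by
      have hmem2 : b - w (d i₀ : V) ∈ ⨆ i, ⨆ (_ : i ≠ t), Q i := by
        rw [h1]
        exact hwrest
      exact Submodule.disjoint_def.mp hdisj _ h2 hmem2
    exact (sub_eq_zero.mp hz).symm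
  -- part 4 preliminaries
  have step0 : ∀ (k p q : ℤ) (v : V), v ∈ P k p q → X (Y v) = Y (X v) + (k : ℂ) • v := by
    intro k p q v hv
    have h := LinearMap.congr_fun hXY v
    simp only [LinearMap.sub_apply, Module.End.mul_apply] at h
    rw [hH k p q v hv] at h
    rw [← h]
    abel
  have comm1 : ∀ (m : ℕ) (k p q : ℤ) (v : V), v ∈ P k p q →
      (X ^ (m+1)) (Y v) = Y ((X ^ (m+1)) v)
        + ((((m+1:ℕ)) : ℂ) * ((k:ℂ) + ((m:ℕ) : ℂ))) • ((X ^ m) v) := by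
    intro m
    induction m with
    | zero =>
      intro k p q v hv
      simpa using step0 k p q v hv
    | succ m ih =>
      intro k p q v hv
      have hu : (X ^ (m+1)) v ∈ P (k + 2*((m+1:ℕ):ℤ)) (p + ((m+1:ℕ):ℤ)) (q + ((m+1:ℕ):ℤ)) :=
        memX (m+1) k p q v hv
      have hstep := step0 _ _ _ _ hu
      have hxm : X ((X ^ m) v) = (X ^ (m+1)) v := by rw [pow_succ' X m]; rfl
      have hx2 : X ((X ^ (m+1)) v) = (X ^ (m+1+1)) v := by rw [pow_succ' X (m+1)]; rfl
      calc (X ^ (m+1+1)) (Y v) = X ((X ^ (m+1)) (Y v)) := by rw [pow_succ']; rfl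
        _ = X (Y ((X ^ (m+1)) v))
            + ((((m+1:ℕ)) : ℂ) * ((k:ℂ) + ((m:ℕ):ℂ))) • (X ((X ^ m) v)) := by
            rw [ih k p q v hv, map_add, map_smul]
        _ = Y (X ((X ^ (m+1)) v)) + ((k + 2*((m+1:ℕ):ℤ) : ℤ) : ℂ) • ((X ^ (m+1)) v)
            + ((((m+1:ℕ)) : ℂ) * ((k:ℂ) + ((m:ℕ):ℂ))) • ((X ^ (m+1)) v) := by
            rw [hstep, hxm]
        _ = Y ((X ^ (m+1+1)) v)
            + ((((m+1+1:ℕ)) : ℂ) * ((k:ℂ) + (((m+1:ℕ)) : ℂ))) • ((X ^ (m+1)) v) := by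
            rw [hx2, add_assoc, ← add_smul]
            congr 2
            push_cast
            ring
  have Xinj0 : ∀ (s : ℕ) (p q : ℤ) (v : V),
      v ∈ P (-(s:ℤ)) (p - (s:ℤ)) (q - (s:ℤ)) → (X ^ s) v = 0 → v = 0 := by
    intro s p q v hv hv0
    obtain ⟨x, hx, huniq⟩ := hXiso s p q 0 (zero_mem _)
    have h1 : v = x := huniq v ⟨hv, hv0⟩
    have h2 : (0:V) = x := huniq 0 ⟨zero_mem _, map_zero _⟩
    rw [h1, ← h2]
  have hbotpos : ∀ (s : ℕ), Module.finrank ℂ V < s → ∀ p q : ℤ, ∀ v ∈ P ((s:ℕ):ℤ) p q,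
      v = 0 := by
    intro s hs p q v hv
    obtain ⟨x, ⟨hxmem, hxeq⟩, -⟩ := hXiso s p q v hv
    rw [← hxeq, weilAux_pow_zero_of_le X nilpX (le_of_lt hs)]
    rfl
  have hbotneg : ∀ (s : ℕ), Module.finrank ℂ V < s → ∀ p q : ℤ, ∀ v ∈ P (-(s:ℤ)) p q,
      v = 0 := by
    intro s hs p q v hv
    obtain ⟨x, ⟨hxmem, hxeq⟩, -⟩ := hYiso s p q v hv
    have hx0 : x = 0 := hbotpos s hs (p+s) (q+s) x hxmem
    rw [← hxeq, hx0, map_zero]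
  have hdec_zero : ∀ (k p q : ℤ) (a : V), a = 0 → ∃ (m : ℕ) (c : ℕ → V),
      (∀ j : ℕ, c j ∈ P (k - 2 * (j : ℤ)) (p - j) (q - j)) ∧
      (∀ j : ℕ, Y (c j) = 0) ∧
      (∀ j : ℕ, (j : ℤ) < max k 0 → c j = 0) ∧
      a = ∑ j ∈ Finset.range 0, ((j.factorial : ℂ))⁻¹ • (X ^ j) ((fun _ => (0:V)) j) := by
    intro k p q a ha0
    exact ⟨0, fun _ => 0, fun j => zero_mem _, fun j => map_zero Y, fun j _ => rfl,
      by rw [ha0, Finset.range_zero, Finset.sum_empty]⟩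
  have part4 : ∀ k p q : ℤ, ∀ a ∈ P k p q, ∃ (m : ℕ) (c : ℕ → V),
      (∀ j : ℕ, c j ∈ P (k - 2 * (j : ℤ)) (p - j) (q - j)) ∧
      (∀ j : ℕ, Y (c j) = 0) ∧
      (∀ j : ℕ, (j : ℤ) < max k 0 → c j = 0) ∧
      a = ∑ j ∈ Finset.range m, ((j.factorial : ℂ))⁻¹ • (X ^ j) (c j) := by
    have hsuff : ∀ (nn : ℕ) (k p q : ℤ) (a : V), a ∈ P k p q →
        (k + (Module.finrank ℂ V : ℤ) + 2).toNat ≤ nn → ∃ (m : ℕ) (c : ℕ → V),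
        (∀ j : ℕ, c j ∈ P (k - 2 * (j : ℤ)) (p - j) (q - j)) ∧
        (∀ j : ℕ, Y (c j) = 0) ∧
        (∀ j : ℕ, (j : ℤ) < max k 0 → c j = 0) ∧
        a = ∑ j ∈ Finset.range m, ((j.factorial : ℂ))⁻¹ • (X ^ j) (c j) := by
      intro nn
      induction nn with
      | zero =>
        intro k p q a ha hbound
        have hs : -(((-k).toNat : ℕ):ℤ) = k := by omega
        obtain ⟨m, c, h1, h2, h3, h4⟩ := hdec_zero k p q a
          (hbotneg (-k).toNat (by omega) p q a (by rw [hs]; exact ha))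
        exact ⟨0, c, h1, h2, h3, h4⟩
      | succ nn ih =>
        intro k p q a ha hbound
        rcases lt_or_ge k (-((Module.finrank ℂ V : ℕ):ℤ)) with hk | hk
        · have hs : -(((-k).toNat : ℕ):ℤ) = k := by omega
          obtain ⟨m, c, h1, h2, h3, h4⟩ := hdec_zero k p q a
            (hbotneg (-k).toNat (by omega) p q a (by rw [hs]; exact ha))
          exact ⟨0, c, h1, h2, h3, h4⟩
        rcases le_or_gt k 0 with hk0 | hk0
        · -- k ≤ 0
          set L : ℕ := (-k).toNat with hLdef
          have hLk : ((L:ℕ):ℤ) = -k := Int.toNat_of_nonneg (by omega)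
          have hy : (X ^ (L+1)) a ∈ P (((L+2:ℕ)):ℤ) (p + (L:ℤ) + 1) (q + (L:ℤ) + 1) := by
            have := memX (L+1) k p q a ha
            convert this using 2 <;> push_cast <;> omega
          obtain ⟨b, ⟨hbmem, hbeq⟩, -⟩ := hXiso (L+2) (p + (L:ℤ) + 1) (q + (L:ℤ) + 1) _ hy
          have hbmem' : b ∈ P (k-2) (p-1) (q-1) := by
            convert hbmem using 2 <;> push_cast <;> omega
          have hXbmem : X b ∈ P k p q := by
            have := hX (k-2) (p-1) (q-1) b hbmem'
            convert this using 2 <;> omega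
          have ha₀mem : a - X b ∈ P k p q := sub_mem ha hXbmem
          have hXa₀ : (X ^ (L+1)) (a - X b) = 0 := by
            rw [map_sub]
            have h1 : (X ^ (L+1)) (X b) = (X ^ (L+2)) b := by
              rw [show L+2 = (L+1)+1 from rfl, pow_succ]
              rfl
            rw [h1, hbeq, sub_self]
          have hYa₀ : Y (a - X b) = 0 := by
            have hmemY' : Y (a - X b)
                ∈ P (-(((L+2:ℕ)):ℤ)) ((p + (L:ℤ) + 1) - ((L+2:ℕ):ℤ)) ((q + (L:ℤ) + 1) - ((L+2:ℕ):ℤ)) := by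
              have := hY k p q _ ha₀mem
              convert this using 2 <;> push_cast <;> omega
            refine Xinj0 (L+2) (p + (L:ℤ) + 1) (q + (L:ℤ) + 1) _ hmemY' ?_
            have hc := comm1 (L+1) k p q (a - X b) ha₀mem
            have hX2 : (X ^ (L+1+1)) (a - X b) = 0 := by
              rw [pow_succ']
              show X ((X ^ (L+1)) (a - X b)) = 0
              rw [hXa₀, map_zero]
            rw [hX2, map_zero, zero_add, hXa₀, smul_zero] at hc
            exact hc
          have hb2 : ((k-2) + (Module.finrank ℂ V : ℤ) + 2).toNat ≤ nn := by omega
          obtain ⟨m, c, hc1, hc2, hc3, hc4⟩ := ih (k-2) (p-1) (q-1) b hbmem' hb2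
          refine ⟨m+1, fun j => if j = 0 then a - X b else ((j:ℕ):ℂ) • c (j-1),
            ?_, ?_, ?_, ?_⟩
          · intro j
            rcases Nat.eq_zero_or_pos j with rfl | hj
            · simpa using ha₀mem
            · obtain ⟨j', rfl⟩ := Nat.exists_eq_succ_of_ne_zero (Nat.pos_iff_ne_zero.mp hj)
              simp only [if_neg (Nat.succ_ne_zero j'), Nat.succ_sub_one]
              refine Submodule.smul_mem _ _ ?_
              have := hc1 j'
              convert this using 2 <;> push_cast <;> ring
          · intro j
            rcases Nat.eq_zero_or_pos j with rfl | hj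
            · simpa using hYa₀
            · obtain ⟨j', rfl⟩ := Nat.exists_eq_succ_of_ne_zero (Nat.pos_iff_ne_zero.mp hj)
              simp only [if_neg (Nat.succ_ne_zero j'), Nat.succ_sub_one, map_smul, hc2 j',
                smul_zero]
          · intro j hjlt
            exfalso
            have hmax : max k 0 = 0 := max_eq_right hk0
            omega
          · rw [Finset.sum_range_succ']
            have hstep : ∀ j : ℕ, (((j+1).factorial : ℂ))⁻¹ • (X ^ (j+1))
                (if j+1 = 0 then a - X b else (((j+1:ℕ)):ℂ) • c (j+1-1))
                = ((j.factorial : ℂ))⁻¹ • (X ^ (j+1)) (c j) := by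
              intro j
              rw [if_neg (Nat.succ_ne_zero j), Nat.add_sub_cancel, map_smul, smul_smul,
                weilAux_coeff1]
            rw [Finset.sum_congr rfl (fun j _ => hstep j)]
            have hXb : X b = ∑ j ∈ Finset.range m, ((j.factorial : ℂ))⁻¹ • (X ^ (j+1)) (c j) := by
              rw [hc4, map_sum]
              refine Finset.sum_congr rfl (fun j _ => ?_)
              rw [map_smul]
              congr 1
              rw [pow_succ']
              rfl
            rw [← hXb]
            have h00 : ((Nat.factorial 0 : ℂ))⁻¹ • (X ^ 0)
                (if (0:ℕ) = 0 then a - X b else (((0:ℕ)):ℂ) • c (0-1)) = a - X b := by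
              norm_num
            rw [h00]
            abel
        · -- k ≥ 1
          set κ : ℕ := k.toNat with hκdef
          have hκk : ((κ:ℕ):ℤ) = k := Int.toNat_of_nonneg (by omega)
          have ha' : a ∈ P ((κ:ℕ):ℤ) p q := by rw [hκk]; exact ha
          obtain ⟨b, ⟨hbmem, hbeq⟩, -⟩ := hXiso κ p q a ha'
          have hbmem' : b ∈ P (-k) (p-k) (q-k) := by
            convert hbmem using 2 <;> omega
          have hb2 : ((-k) + (Module.finrank ℂ V : ℤ) + 2).toNat ≤ nn := by omega
          obtain ⟨m, c, hc1, hc2, hc3, hc4⟩ := ih (-k) (p-k) (q-k) b hbmem' hb2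
          refine ⟨κ+m, fun j => if h : κ ≤ j
            then ((j.factorial : ℂ) * (((j-κ).factorial : ℂ))⁻¹) • c (j-κ) else 0,
            ?_, ?_, ?_, ?_⟩
          · intro j
            beta_reduce
            by_cases hj : κ ≤ j
            · rw [dif_pos hj]
              refine Submodule.smul_mem _ _ ?_
              have := hc1 (j-κ)
              convert this using 2 <;> push_cast [Nat.cast_sub hj] <;> omega
            · rw [dif_neg hj]; exact zero_mem _
          · intro j
            beta_reduce
            by_cases hj : κ ≤ j
            · rw [dif_pos hj, map_smul, hc2, smul_zero]
            · rw [dif_neg hj, map_zero]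
          · intro j hjlt
            beta_reduce
            have hmax : max k 0 = k := max_eq_left (le_of_lt hk0)
            rw [dif_neg (by omega)]
          · beta_reduce
            rw [Finset.sum_range_add]
            have hzero : ∑ j ∈ Finset.range κ, ((j.factorial : ℂ))⁻¹ • (X ^ j)
                (if h : κ ≤ j
                  then ((j.factorial : ℂ) * (((j-κ).factorial : ℂ))⁻¹) • c (j-κ) else 0) = 0 := by
              refine Finset.sum_eq_zero (fun j hj => ?_)
              rw [dif_neg (by simp only [Finset.mem_range] at hj; omega), map_zero, smul_zero]
            have hterm : ∀ j : ℕ, (((κ+j).factorial : ℂ))⁻¹ • (X ^ (κ+j))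
                (if h : κ ≤ κ+j
                  then (((κ+j).factorial : ℂ) * ((((κ+j)-κ).factorial : ℂ))⁻¹) • c ((κ+j)-κ)
                  else 0)
                = ((j.factorial : ℂ))⁻¹ • (X ^ (κ+j)) (c j) := by
              intro j
              rw [dif_pos (Nat.le_add_right κ j), Nat.add_sub_cancel_left, map_smul, smul_smul]
              congr 1
              have hnz : ((κ+j).factorial : ℂ) ≠ 0 :=
                Nat.cast_ne_zero.mpr (Nat.factorial_ne_zero _)
              field_simp
            rw [hzero, zero_add, Finset.sum_congr rfl (fun j _ => hterm j)]
            rw [← hbeq, hc4, map_sum]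
            refine Finset.sum_congr rfl (fun j _ => ?_)
            rw [map_smul]
            congr 1
            rw [pow_add]
            rfl
    intro k p q a ha
    exact hsuff ((k + (Module.finrank ℂ V : ℤ) + 2).toNat) k p q a ha le_rfl
  exact ⟨part1, part2, part3, part4⟩
end

section
/- Let V be a finite-dimensional complex vector space, N a nilpotent endomorphism with monodromy filtration W_•, and suppose additionally every power of N is strict with respect to a filtration F_• (i.e. N^a(F_b) = F_{a+b} ∩ N^a(V)). Then the two natural filtrations on the primitive part P_r = ker(N^{r+1} : gr^W_r → gr^W_{-r-2}) coincide: the filtration induced from F_• gr^W_r via the inclusion P_r ⊆ gr^W_r equals the filtration given by the image of F_ℓ ∩ ker(N^{r+1}) under the quotient map ker N^{r+1} → ker N^{r+1}/(ker N^r + N·ker N^{r+2}) ≅ P_r. -/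
/-- Assume every power of the nilpotent endomorphism `N` is strict with respect to
the filtration `F`.  Then the two natural filtrations on the primitive part
`P_r = ker (N^{r+1} : gr^W_r → gr^W_{-r-2})` coincide: the filtration induced from
`F_• gr^W_r` via the inclusion `P_r ⊆ gr^W_r` equals the filtration given by the
image of `F_ℓ ∩ ker N^{r+1}`.  Concretely: `ker N^{r+1} ⊆ W_r` (so that classes of
elements of `F ℓ ∩ ker N^{r+1}` land in `F_ℓ gr^W_r ∩ P_r`), and conversely every
`x ∈ F ℓ ∩ W r` whose class in `gr^W_r` is primitive agrees modulo `W (r-1)` with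
some `y ∈ F ℓ ∩ ker N^{r+1}`. -/
theorem primitive_part_filtrations_coincide
    (V : Type*) [AddCommGroup V] [Module ℂ V] [FiniteDimensional ℂ V]
    (N : V →ₗ[ℂ] V) (hN : IsNilpotent N)
    (F : ℤ → Submodule ℂ V) (hFmono : Monotone F) (hFexh : (⨆ b : ℤ, F b) = ⊤)
    (hNF : ∀ b : ℤ, (F b).map N ≤ F (b + 1))
    (hstrict : ∀ (a : ℕ) (b : ℤ),
      (F b).map (N ^ a) = F ((a : ℤ) + b) ⊓ LinearMap.range (N ^ a))
    (W : ℤ → Submodule ℂ V) (hW : IsMonodromyFiltration N W)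
    (r : ℕ) (ℓ : ℤ) :
    (∀ y : V, (N ^ (r + 1)) y = 0 → y ∈ W (r : ℤ)) ∧
    (∀ x ∈ F ℓ ⊓ W (r : ℤ), (N ^ (r + 1)) x ∈ W (-(r : ℤ) - 3) →
      ∃ y : V, y ∈ F ℓ ∧ (N ^ (r + 1)) y = 0 ∧ x - y ∈ W ((r : ℤ) - 1)) := by
  obtain ⟨hWmono, ⟨a, ha⟩, ⟨b, hb⟩, hWN, hWgr⟩ := hW
  -- Lemma A': kernel of N^{m+1} inside W (m+j) lies in W m
  have hA' : ∀ j : ℕ, ∀ m : ℕ, ∀ y : V, (N ^ (m + 1)) y = 0 →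
      y ∈ W ((m : ℤ) + j) → y ∈ W (m : ℤ) := by
    intro j
    induction j with
    | zero => intro m y _ hyW; simpa using hyW
    | succ j ih =>
      intro m y hy hyW
      apply ih m y hy
      have hk : y ∈ W ((m + j + 1 : ℕ) : ℤ) := by
        have : ((m + j + 1 : ℕ) : ℤ) = (m : ℤ) + (j + 1 : ℕ) := by push_cast; ring
        rw [this]; exact hyW
      have h0 : (N ^ (m + j + 1)) y = 0 := by
        have he : m + j + 1 = j + (m + 1) := by omega
        rw [he, pow_add, Module.End.mul_apply, hy, map_zero]
      have := (hWgr (m + j + 1)).1 y hk (by rw [h0]; exact (W _).zero_mem)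
      have hcast : ((m + j + 1 : ℕ) : ℤ) - 1 = (m : ℤ) + (j : ℕ) := by push_cast; ring
      rw [hcast] at this; exact this
  -- Lemma A : ker N^{m+1} ⊆ W m
  have hA : ∀ m : ℕ, ∀ y : V, (N ^ (m + 1)) y = 0 → y ∈ W (m : ℤ) := by
    intro m y hy
    have hj : b ≤ (m : ℤ) + ((b - m).toNat : ℤ) := by omega
    exact hA' (b - m).toNat m y hy (hWmono hj (by rw [hb]; trivial))
  -- Lemma B : W (-m) ⊆ N^m (W m)
  have hB' : ∀ j : ℕ, ∀ m : ℕ, -(m : ℤ) < a + j →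
      ∀ w ∈ W (-(m : ℤ)), ∃ u ∈ W (m : ℤ), (N ^ m) u = w := by
    intro j
    induction j with
    | zero =>
      intro m hm w hw
      refine ⟨0, (W _).zero_mem, ?_⟩
      have : w ∈ W a := hWmono (by omega) hw
      rw [ha, Submodule.mem_bot] at this
      simp [this]
    | succ j ih =>
      intro m hm w hw
      obtain ⟨u, hu, hu2⟩ := (hWgr m).2 w hw
      have hw' : w - (N ^ m) u ∈ W (-((m + 1 : ℕ) : ℤ)) := by
        have : -((m + 1 : ℕ) : ℤ) = -(m : ℤ) - 1 := by push_cast; ring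
        rw [this]
        simpa using (W _).neg_mem hu2
      obtain ⟨u', hu', hu'2⟩ := ih (m + 1) (by push_cast; push_cast at hm; omega) _ hw'
      refine ⟨u + N u', ?_, ?_⟩
      · refine (W _).add_mem hu ?_
        have : N u' ∈ W (((m + 1 : ℕ) : ℤ) - 2) := hWN _ ⟨u', hu', rfl⟩
        exact hWmono (by push_cast; omega) this
      · have hmu : (N ^ m) (N u') = (N ^ (m + 1)) u' := by
          rw [pow_succ, Module.End.mul_apply]
        rw [map_add, hmu, hu'2]
        abel
  have hB : ∀ m : ℕ, ∀ w ∈ W (-(m : ℤ)), ∃ u ∈ W (m : ℤ), (N ^ m) u = w := by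
    intro m w hw
    exact hB' (-(m : ℤ) - a + 1).toNat m (by omega) w hw
  refine ⟨fun y hy => hA r y hy, ?_⟩
  intro x hx hx3
  set w := (N ^ (r + 1)) x with hwdef
  have hw3 : w ∈ W (-((r + 3 : ℕ) : ℤ)) := by
    have : -((r + 3 : ℕ) : ℤ) = -(r : ℤ) - 3 := by push_cast; ring
    rw [this]; exact hx3
  obtain ⟨u, hu, huw⟩ := hB (r + 3) w hw3
  have hwF : w ∈ F (((r + 1 : ℕ) : ℤ) + ℓ) := by
    have : w ∈ (F ℓ).map (N ^ (r + 1)) := ⟨x, hx.1, rfl⟩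
    rw [hstrict (r + 1) ℓ] at this
    exact this.1
  have hwmem : w ∈ (F (ℓ - 2)).map (N ^ (r + 3)) := by
    rw [hstrict (r + 3) (ℓ - 2)]
    refine ⟨?_, ⟨u, huw⟩⟩
    have : ((r + 3 : ℕ) : ℤ) + (ℓ - 2) = ((r + 1 : ℕ) : ℤ) + ℓ := by push_cast; ring
    rw [this]; exact hwF
  obtain ⟨z, hzF, hzw⟩ := hwmem
  have hN2z : (N ^ 2) z ∈ F ℓ := by
    have : (N ^ 2) z ∈ (F (ℓ - 2)).map (N ^ 2) := ⟨z, hzF, rfl⟩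
    rw [hstrict 2 (ℓ - 2)] at this
    have h2 : ((2 : ℕ) : ℤ) + (ℓ - 2) = ℓ := by push_cast; ring
    rw [h2] at this
    exact this.1
  have hpow : (N ^ (r + 1)) ((N ^ 2) z) = (N ^ (r + 3)) z := by
    have : (N ^ (r + 3)) = N ^ (r + 1) * N ^ 2 := by rw [← pow_add]
    rw [this, Module.End.mul_apply]
  -- z ∈ W (r + 3)
  have hzu : z - u ∈ W ((r + 2 : ℕ) : ℤ) := by
    apply hA (r + 2)
    rw [map_sub]
    have : r + 2 + 1 = r + 3 := by omega
    rw [this, hzw, huw, sub_self]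
  have hzW : z ∈ W ((r + 3 : ℕ) : ℤ) := by
    have : z = (z - u) + u := by abel
    rw [this]
    exact (W _).add_mem (hWmono (by push_cast; omega) hzu) hu
  have hN2zW : (N ^ 2) z ∈ W ((r : ℤ) - 1) := by
    have h1 : N z ∈ W (((r + 3 : ℕ) : ℤ) - 2) := hWN _ ⟨z, hzW, rfl⟩
    have h2 : N (N z) ∈ W ((((r + 3 : ℕ) : ℤ) - 2) - 2) := hWN _ ⟨N z, h1, rfl⟩
    have hc : ((((r + 3 : ℕ) : ℤ) - 2) - 2) = (r : ℤ) - 1 := by push_cast; ring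
    rw [hc] at h2
    have : (N ^ 2) z = N (N z) := by rw [pow_two, Module.End.mul_apply]
    rw [this]; exact h2
  refine ⟨x - (N ^ 2) z, (F ℓ).sub_mem hx.1 hN2z, ?_, ?_⟩
  · rw [map_sub, hpow, hzw, ← hwdef, sub_self]
  · have : x - (x - (N ^ 2) z) = (N ^ 2) z := by abel
    rw [this]; exact hN2zW
end
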